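/- arXiv:1805.11763 — 6 statements merged into one kernel-verified Lean document; each statement's English description precedes it below -/
import Mathlib

section
/- For all 0 < c < b ≤ 1, one has ζ_b(b)/ζ_c(c) > b/c, where ζ_t(s) = s + (1-t)·ln(1-s). -/
noncomputable def zeta (t s : ℝ) : ℝ := s + (1 - t) * Real.log (1 - s)

/-- log(1-x) < -x for x ∈ (0,1) -/
lemma log_one_sub_lt_neg {x : ℝ} (hx : 0 < x) (hx1 : x < 1) :
    Real.log (1 - x) < -x := by
  have h := Real.log_lt_sub_one_of_pos (by linarith : (0:ℝ) < 1 - x) (by linarith)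
  linarith

/-- log y > 1 - 1/y for y ∈ (0,1). -/
lemma log_gt_one_sub_inv {y : ℝ} (hy : 0 < y) (hy1 : y < 1) :
    1 - 1/y < Real.log y := by
  have h := Real.log_lt_sub_one_of_pos (by positivity : (0:ℝ) < 1/y)
    (by intro h; rw [div_eq_one_iff_eq (ne_of_gt hy)] at h; linarith)
  rw [one_div, Real.log_inv] at h
  have : 1/y = y⁻¹ := one_div y
  linarith [h, this ▸ h]

theorem stmt1 (b c : ℝ) (hc : 0 < c) (hcb : c < b) (hb : b ≤ 1) :
    zeta b b / zeta c c > b / c := by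
  have hc1 : c < 1 := lt_of_lt_of_le hcb hb
  have h1c : 0 < 1 - c := by linarith
  -- positivity of zeta c c
  have hK : 0 < zeta c c := by
    have h := log_gt_one_sub_inv h1c (by linarith : 1 - c < 1)
    have h2 : (1 - c) * (1 - 1/(1-c)) < (1 - c) * Real.log (1 - c) :=
      (mul_lt_mul_iff_right₀ h1c).mpr h
    have h3 : (1 - c) * (1 - 1/(1-c)) = -c := by field_simp; ring
    unfold zeta
    nlinarith
  set K : ℝ := zeta c c with hKdef
  rw [gt_iff_lt, div_lt_div_iff₀ hc hK]
  -- define F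
  set F : ℝ → ℝ := fun t => c * (t + (1-t) * Real.log (1-t)) - t * K with hF
  have hcont : Continuous F := by
    have h1 : Continuous fun t : ℝ => (1-t) * Real.log (1-t) :=
      Real.continuous_mul_log.comp (continuous_const.sub continuous_id)
    exact (continuous_const.mul (continuous_id.add h1)).sub
      (continuous_id.mul continuous_const)
  have hderiv : ∀ x ∈ Set.Ioo c 1, HasDerivAt F (-c * Real.log (1-x) - K) x := by
    intro x hx
    obtain ⟨hxc, hx1⟩ := hx
    have hne : 1 - x ≠ 0 := by intro h; linarith [hx1]
    have hu : HasDerivAt (fun t : ℝ => 1 - t) (-1) x := by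
      simpa using (hasDerivAt_id x).const_sub 1
    have hlog : HasDerivAt (fun t : ℝ => Real.log (1 - t)) ((1-x)⁻¹ * (-1)) x :=
      (Real.hasDerivAt_log hne).comp x hu
    have hprod : HasDerivAt (fun t : ℝ => (1-t) * Real.log (1-t))
        ((-1) * Real.log (1-x) + (1-x) * ((1-x)⁻¹ * (-1))) x := hu.mul hlog
    have hsum : HasDerivAt (fun t : ℝ => t + (1-t) * Real.log (1-t))
        (1 + ((-1) * Real.log (1-x) + (1-x) * ((1-x)⁻¹ * (-1)))) x :=
      (hasDerivAt_id x).add hprod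
    have hmul : HasDerivAt (fun t : ℝ => c * (t + (1-t) * Real.log (1-t)))
        (c * (1 + ((-1) * Real.log (1-x) + (1-x) * ((1-x)⁻¹ * (-1))))) x :=
      hsum.const_mul c
    have hlin : HasDerivAt (fun t : ℝ => t * K) K x := by
      simpa using (hasDerivAt_id x).mul_const K
    have := hmul.sub hlin
    refine this.congr_deriv ?_
    rw [mul_inv_cancel_left₀ hne]
    ring
  have hderivpos : ∀ x ∈ interior (Set.Icc c 1), 0 < deriv F x := by
    rw [interior_Icc]
    intro x hx
    rw [(hderiv x hx).deriv]
    obtain ⟨hxc, hx1⟩ := hx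
    have h1x : 0 < 1 - x := by linarith
    have hlt : Real.log (1-x) < Real.log (1-c) := Real.log_lt_log h1x (by linarith)
    have hkey : Real.log (1-c) < -c := log_one_sub_lt_neg hc hc1
    -- K = c + (1-c) log(1-c); need -c*log(1-x) > K
    have hKeq : K = c + (1-c) * Real.log (1-c) := rfl
    nlinarith [mul_lt_mul_of_pos_left hlt hc]
  have hmono : StrictMonoOn F (Set.Icc c 1) :=
    StrictMonoOn.mono (strictMonoOn_of_deriv_pos (convex_Icc c 1)
      hcont.continuousOn hderivpos) le_rfl
  have hFc : F c = c * K - c * K := by rfl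
  have := hmono ⟨le_refl c, hc1.le⟩ ⟨hcb.le, hb⟩ hcb
  have hFb : F b = c * zeta b b - b * K := by
    simp only [hF, zeta]
  rw [hFb] at this
  have : 0 < c * zeta b b - b * K := by
    have h0 : F c = 0 := by rw [hFc]; ring
    linarith [h0 ▸ this]
  linarith [this]
end

section
/- For fixed s ∈ [0,1), define ξ_s(t) = ζ_t(t) - ζ_t(s) where ζ_t(s) = s + (1-t)ln(1-s). Then ξ_s(0) = ln(1/(1-s)) - s, ξ_s(s) = 0, ξ_s(1) = 1 - s, ξ_s is continuous on [0,1], strictly decreasing on (0,s), and strictly increasing on (s,1). -/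
noncomputable def xi (s t : ℝ) : ℝ := zeta t t - zeta t s

lemma xi_eq (s t : ℝ) : xi s t = t + (1 - t) * Real.log (1 - t) - (s + (1 - t) * Real.log (1 - s)) := by
  simp [xi, zeta]

lemma hasDerivAt_xi (s t : ℝ) (ht : t < 1) :
    HasDerivAt (xi s) (Real.log (1 - s) - Real.log (1 - t)) t := by
  have h1t : (1 : ℝ) - t ≠ 0 := by linarith
  have hsub : HasDerivAt (fun x : ℝ => 1 - x) (-1) t := by
    simpa using (hasDerivAt_id t).const_sub 1
  have hlog : HasDerivAt (fun x : ℝ => Real.log (1 - x)) (-(1 - t)⁻¹) t := by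
    simpa [Function.comp_def] using (Real.hasDerivAt_log h1t).comp t hsub
  have hmul : HasDerivAt (fun x : ℝ => (1 - x) * Real.log (1 - x))
      (-1 * Real.log (1 - t) + (1 - t) * (-(1 - t)⁻¹)) t := hsub.mul hlog
  have hmul2 : HasDerivAt (fun x : ℝ => (1 - x) * Real.log (1 - s))
      (-1 * Real.log (1 - s)) t := hsub.mul_const _
  have h : HasDerivAt (fun x : ℝ => x + (1 - x) * Real.log (1 - x) - (s + (1 - x) * Real.log (1 - s)))
      (1 + (-1 * Real.log (1 - t) + (1 - t) * (-(1 - t)⁻¹)) - (0 + -1 * Real.log (1 - s))) t :=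
    ((hasDerivAt_id t).add hmul).sub ((hasDerivAt_const t s).add hmul2)
  have hfun : (fun x : ℝ => x + (1 - x) * Real.log (1 - x) - (s + (1 - x) * Real.log (1 - s))) = xi s :=
    funext fun x => (xi_eq s x).symm
  rw [hfun] at h
  convert h using 1
  field_simp
  ring

theorem stmt2 (s : ℝ) (hs : s ∈ Set.Ico (0:ℝ) 1) :
    xi s 0 = Real.log (1 / (1 - s)) - s ∧
    xi s s = 0 ∧
    xi s 1 = 1 - s ∧
    ContinuousOn (xi s) (Set.Icc 0 1) ∧
    StrictAntiOn (xi s) (Set.Ioo 0 s) ∧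
    StrictMonoOn (xi s) (Set.Ioo s 1) := by
  obtain ⟨hs0, hs1⟩ := hs
  have h1s : (0:ℝ) < 1 - s := by linarith
  refine ⟨?_, ?_, ?_, ?_, ?_, ?_⟩
  · rw [xi_eq]
    rw [Real.log_div one_ne_zero (by linarith)]
    simp
    ring
  · simp [xi]
  · rw [xi_eq]; simp
  · have hcont : Continuous (xi s) := by
      have h1 : Continuous fun x : ℝ => (1 - x) * Real.log (1 - x) := by
        exact Real.continuous_mul_log.comp ((continuous_const (y := (1:ℝ))).sub continuous_id)
      have : Continuous fun t : ℝ => t + (1 - t) * Real.log (1 - t) - (s + (1 - t) * Real.log (1 - s)) := by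
        continuity
      exact this.congr fun x => (xi_eq s x).symm
    exact hcont.continuousOn
  · apply strictAntiOn_of_deriv_neg (convex_Ioo 0 s)
    · exact Continuous.continuousOn (by
        have h1 : Continuous fun x : ℝ => (1 - x) * Real.log (1 - x) := by
          exact Real.continuous_mul_log.comp ((continuous_const (y := (1:ℝ))).sub continuous_id)
        exact (by continuity : Continuous fun t : ℝ => t + (1 - t) * Real.log (1 - t) - (s + (1 - t) * Real.log (1 - s))).congr
          fun x => (xi_eq s x).symm)
    · intro x hx
      rw [interior_Ioo] at hx
      obtain ⟨hx0, hxs⟩ := hx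
      rw [(hasDerivAt_xi s x (by linarith)).deriv]
      have : Real.log (1 - s) < Real.log (1 - x) :=
        Real.log_lt_log h1s (by linarith)
      linarith
  · apply strictMonoOn_of_deriv_pos (convex_Ioo s 1)
    · exact Continuous.continuousOn (by
        have h1 : Continuous fun x : ℝ => (1 - x) * Real.log (1 - x) := by
          exact Real.continuous_mul_log.comp ((continuous_const (y := (1:ℝ))).sub continuous_id)
        exact (by continuity : Continuous fun t : ℝ => t + (1 - t) * Real.log (1 - t) - (s + (1 - t) * Real.log (1 - s))).congr
          fun x => (xi_eq s x).symm)
    · intro x hx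
      rw [interior_Ioo] at hx
      obtain ⟨hxs, hx1⟩ := hx
      rw [(hasDerivAt_xi s x (by linarith)).deriv]
      have : Real.log (1 - x) < Real.log (1 - s) :=
        Real.log_lt_log (by linarith) (by linarith)
      linarith
end

section
/- Fix t ∈ [0,1) and let d ∈ (t,1) be the unique solution of ξ_d(t) = ξ_d(1). For s ∈ (t,d), let f(s) = ξ_{s,↑}^{-1}(ξ_s(t)), where ξ_{s,↑} denotes the restriction of ξ_s to [s,1] (which is strictly increasing hence invertible). Then f is strictly increasing on (t,d). -/
lemma xi_strictMonoOn {s : ℝ} (hs : s < 1) :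
    StrictMonoOn (fun u => xi s u) (Set.Icc s 1) := by
  have hcont : ContinuousOn (fun u => xi s u) (Set.Icc s 1) := by
    have h1 : Continuous fun u : ℝ => (1 - u) * Real.log (1 - u) :=
      Real.continuous_mul_log.comp (continuous_const.sub continuous_id)
    have h2 : Continuous fun u : ℝ => xi s u := by
      unfold xi zeta
      exact ((continuous_id.add h1).sub
        (continuous_const.add ((continuous_const.sub continuous_id).mul continuous_const)))
    exact h2.continuousOn
  apply strictMonoOn_of_deriv_pos (convex_Icc s 1) hcont
  intro u hu
  rw [interior_Icc] at hu
  have hu1 : (0 : ℝ) < 1 - u := by linarith [hu.2]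
  have hA : HasDerivAt (fun u : ℝ => 1 - u) (-1) u := (hasDerivAt_id u).const_sub 1
  have hlog : HasDerivAt (fun u : ℝ => Real.log (1 - u)) ((1 - u)⁻¹ * (-1)) u :=
    (Real.hasDerivAt_log (ne_of_gt hu1)).comp u hA
  have hmul : HasDerivAt (fun u : ℝ => (1 - u) * Real.log (1 - u))
      ((-1) * Real.log (1 - u) + (1 - u) * ((1 - u)⁻¹ * (-1))) u := hA.mul hlog
  have hder : HasDerivAt (fun u => xi s u) (Real.log (1 - s) - Real.log (1 - u)) u := by
    have h3 : HasDerivAt (fun u : ℝ => s + (1 - u) * Real.log (1 - s))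
        (0 + (-1) * Real.log (1 - s)) u :=
      (hasDerivAt_const u s).add (hA.mul_const (Real.log (1 - s)))
    have h4 := ((hasDerivAt_id u).add hmul).sub h3
    have : 1 + ((-1) * Real.log (1 - u) + (1 - u) * ((1 - u)⁻¹ * (-1)))
        - (0 + (-1) * Real.log (1 - s)) = Real.log (1 - s) - Real.log (1 - u) := by
      field_simp
      ring
    rw [this] at h4
    exact h4.congr_deriv rfl
  rw [hder.deriv]
  have hlt : Real.log (1 - u) < Real.log (1 - s) :=
    Real.log_lt_log hu1 (by linarith [hu.1])
  linarith

theorem stmt5 (t d : ℝ) (ht : 0 ≤ t) (ht1 : t < 1) (hd : d ∈ Set.Ioo t 1)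
    (hde : xi d t = xi d 1)
    (f : ℝ → ℝ)
    (hf : ∀ s ∈ Set.Ioo t d, f s ∈ Set.Icc s 1 ∧ xi s (f s) = xi s t) :
    StrictMonoOn f (Set.Ioo t d) := by
  intro s₁ h₁ s₂ h₂ hlt
  obtain ⟨hf1m, hf1e⟩ := hf s₁ h₁
  obtain ⟨hf2m, hf2e⟩ := hf s₂ h₂
  by_cases hc : f s₁ < s₂
  · exact lt_of_lt_of_le hc hf2m.1
  push_neg at hc
  have hs2 : s₂ < 1 := h₂.2.trans hd.2
  have hkey : xi s₂ (f s₁) < xi s₂ (f s₂) := by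
    have hid : xi s₂ (f s₁) - xi s₂ t - (xi s₁ (f s₁) - xi s₁ t)
        = (f s₁ - t) * (Real.log (1 - s₂) - Real.log (1 - s₁)) := by
      unfold xi zeta; ring
    have hlog2 : Real.log (1 - s₂) < Real.log (1 - s₁) :=
      Real.log_lt_log (by linarith) (by linarith)
    have hft : t < f s₁ := lt_of_lt_of_le h₂.1 hc
    have hx1 : xi s₁ (f s₁) - xi s₁ t = 0 := by rw [hf1e]; ring
    rw [hf2e]
    nlinarith [mul_pos (sub_pos.mpr hft) (sub_pos.mpr hlog2)]
  exact ((xi_strictMonoOn hs2).lt_iff_lt ⟨hc, hf1m.2⟩ ⟨hf2m.1, hf2m.2⟩).mp hkey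
end

section
/- Let I = [c,d] with c < d, let f and g be bounded measurable functions on I with g nonincreasing, and suppose ∫_{[c,s]} f dλ ≥ 0 for all s ∈ I, with equality if and only if s = c or s = d. Then ∫_I f·g dλ ≥ 0, with equality if and only if g is constant on (c,d). -/
open MeasureTheory

theorem stmt9 (c d : ℝ) (hcd : c < d) (f g : ℝ → ℝ)
    (hfm : Measurable f) (hgm : Measurable g)
    (hfb : ∃ M, ∀ t ∈ Set.Icc c d, |f t| ≤ M)
    (hgb : ∃ M, ∀ t ∈ Set.Icc c d, |g t| ≤ M)
    (hg : AntitoneOn g (Set.Icc c d))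
    (hpos : ∀ s ∈ Set.Icc c d, 0 ≤ ∫ t in Set.Icc c s, f t)
    (heq : ∀ s ∈ Set.Icc c d, (∫ t in Set.Icc c s, f t) = 0 ↔ s = c ∨ s = d) :
    0 ≤ (∫ t in Set.Icc c d, f t * g t) ∧
    ((∫ t in Set.Icc c d, f t * g t) = 0 ↔
      ∀ x ∈ Set.Ioo c d, ∀ y ∈ Set.Ioo c d, g x = g y) := by
  classical
  obtain ⟨M, hM⟩ := hfb
  have hMnn : 0 ≤ M := (abs_nonneg _).trans (hM c ⟨le_rfl, hcd.le⟩)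
  -- clamp function
  set τ : ℝ → ℝ := fun x => max c (min x d) with hτdef
  have hτmem : ∀ x, τ x ∈ Set.Icc c d := fun x =>
    ⟨le_max_left _ _, max_le hcd.le (min_le_right _ _)⟩
  have hτeq : ∀ x ∈ Set.Icc c d, τ x = x := by
    intro x hx
    simp only [hτdef]
    rw [min_eq_left hx.2, max_eq_right hx.1]
  have hτmono : Monotone τ := fun x y hxy =>
    max_le_max le_rfl (min_le_min_right _ hxy)
  set h : ℝ → ℝ := fun x => -g (τ x) with hhdef
  have hmono : Monotone h := fun x y hxy =>
    neg_le_neg (hg (hτmem x) (hτmem y) (hτmono hxy))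
  set S := hmono.stieltjesFunction with hSdef
  have hS : ∀ x, S x = Function.rightLim h x := hmono.stieltjesFunction_eq
  set ν := S.measure with hνdef
  set F : ℝ → ℝ := fun y => ∫ t in Set.Icc c y, f t with hFdef
  have hFd : F d = 0 := (heq d ⟨hcd.le, le_rfl⟩).mpr (Or.inr rfl)
  set μ1 := volume.restrict (Set.Icc c d) with hμ1def
  set μ2 := ν.restrict (Set.Ioc c d) with hμ2def
  have hν_fin : ν (Set.Ioc c d) < ⊤ := by
    rw [S.measure_Ioc]; exact ENNReal.ofReal_lt_top
  haveI : IsFiniteMeasure μ1 :=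
    ⟨by rw [hμ1def, Measure.restrict_apply_univ]; exact measure_Icc_lt_top⟩
  haveI : IsFiniteMeasure μ2 :=
    ⟨by rw [hμ2def, Measure.restrict_apply_univ]; exact hν_fin⟩
  -- integrability helper
  have hbdd_int : ∀ (φ : ℝ → ℝ) (K : ℝ), Measurable φ →
      (∀ t ∈ Set.Icc c d, |φ t| ≤ K) → IntegrableOn φ (Set.Icc c d) := by
    intro φ K hφ hK
    refine Integrable.mono' (integrable_const K) hφ.aestronglyMeasurable.restrict ?_
    exact (ae_restrict_iff' measurableSet_Icc).2 (ae_of_all _ fun t ht => by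
      simpa [Real.norm_eq_abs] using hK t ht)
  have hfi : IntegrableOn f (Set.Icc c d) := hbdd_int f M hfm hM
  have hSmeas : Measurable S := S.mono.measurable
  -- a.e. equality g = -S on Icc c d
  have hae_cont : ∀ᵐ t ∂μ1, ContinuousAt h t := by
    refine ae_restrict_of_ae ?_
    rw [MeasureTheory.ae_iff]
    exact hmono.countable_not_continuousAt.measure_zero _
  have hS_eq_h : ∀ t, ContinuousAt h t → S t = h t := by
    intro t hct
    rw [hS t]
    exact rightLim_eq_of_tendsto (h := nhdsGT_neBot t)
      (hct.continuousWithinAt.tendsto)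
  have key0 : (∫ t in Set.Icc c d, f t * g t)
      = ∫ t, (f t * (S d - S t) - S d * f t) ∂μ1 := by
    refine integral_congr_ae ?_
    filter_upwards [hae_cont, ae_restrict_mem measurableSet_Icc] with t hct ht
    have : S t = -g t := by rw [hS_eq_h t hct, hhdef]; simp [hτeq t ht]
    rw [this]; ring
  have hint1 : IntegrableOn (fun t => f t * (S d - S t)) (Set.Icc c d) := by
    refine hbdd_int _ (M * (S d - S c)) (hfm.mul (measurable_const.sub hSmeas)) ?_
    intro t ht
    rw [abs_mul]
    have h1 : |S d - S t| ≤ S d - S c := by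
      rw [abs_of_nonneg (sub_nonneg.2 (S.mono ht.2))]
      exact sub_le_sub le_rfl (S.mono ht.1)
    exact mul_le_mul (hM t ht) h1 (abs_nonneg _) hMnn
  have hint2 : IntegrableOn (fun t => S d * f t) (Set.Icc c d) := by
    refine hbdd_int _ (|S d| * M) (measurable_const.mul hfm) ?_
    intro t ht
    rw [abs_mul]
    exact mul_le_mul le_rfl (hM t ht) (abs_nonneg _) (abs_nonneg _)
  have key1 : (∫ t in Set.Icc c d, f t * g t)
      = ∫ t, f t * (S d - S t) ∂μ1 := by
    rw [key0, integral_sub hint1 hint2, integral_const_mul]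
    have : (∫ t, f t ∂μ1) = F d := rfl
    rw [this, hFd, mul_zero, sub_zero]
  -- Fubini step
  set e : ℝ → ℝ → ℝ := fun t y => f t * (if t < y then (1:ℝ) else 0) with hedef
  have he_meas : Measurable (Function.uncurry e) := by
    apply (hfm.comp measurable_fst).mul
    exact Measurable.ite (measurableSet_lt measurable_fst measurable_snd)
      measurable_const measurable_const
  have he_int : Integrable (Function.uncurry e) (μ1.prod μ2) := by
    refine Integrable.mono' (integrable_const M) he_meas.aestronglyMeasurable ?_
    have hnull : (μ1.prod μ2) {p : ℝ × ℝ | p.1 ∉ Set.Icc c d} = 0 := by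
      have hsub : {p : ℝ × ℝ | p.1 ∉ Set.Icc c d} ⊆ (Set.Icc c d)ᶜ ×ˢ Set.univ := by
        intro p hp; exact ⟨hp, trivial⟩
      refine measure_mono_null hsub ?_
      rw [Measure.prod_prod]
      have : μ1 (Set.Icc c d)ᶜ = 0 := by
        rw [hμ1def, Measure.restrict_apply (measurableSet_Icc.compl)]
        simp
      rw [this, zero_mul]
    rw [MeasureTheory.ae_iff]
    refine measure_mono_null ?_ hnull
    intro p hp
    simp only [Set.mem_setOf_eq] at hp ⊢
    intro hmem
    apply hp
    have : |f p.1 * (if p.1 < p.2 then (1:ℝ) else 0)| ≤ M := by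
      rw [abs_mul]
      calc |f p.1| * |if p.1 < p.2 then (1:ℝ) else 0|
          ≤ M * 1 := by
            refine mul_le_mul (hM _ hmem) ?_ (abs_nonneg _) hMnn
            split <;> simp
        _ = M := mul_one M
    simpa [Function.uncurry, Real.norm_eq_abs, hedef] using this
  have key2 : (∫ t, f t * (S d - S t) ∂μ1) = ∫ t, (∫ y, e t y ∂μ2) ∂μ1 := by
    refine setIntegral_congr_fun measurableSet_Icc ?_
    intro t ht
    dsimp only
    have h1 : (∫ y, e t y ∂μ2) = f t * ∫ y, (if t < y then (1:ℝ) else 0) ∂μ2 := by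
      simp only [hedef]
      exact integral_const_mul _ _
    have h2 : (∫ y, (if t < y then (1:ℝ) else 0) ∂μ2) = (μ2 (Set.Ioi t)).toReal := by
      have : (fun y => if t < y then (1:ℝ) else 0)
          = (Set.Ioi t).indicator (fun _ => (1:ℝ)) := by
        ext y; simp [Set.indicator_apply, Set.mem_Ioi]
      rw [this, integral_indicator_const (1:ℝ) measurableSet_Ioi, smul_eq_mul, mul_one, measureReal_def]
    have h3 : μ2 (Set.Ioi t) = ν (Set.Ioc t d) := by
      rw [hμ2def, Measure.restrict_apply measurableSet_Ioi]
      congr 1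
      ext y
      simp only [Set.mem_inter_iff, Set.mem_Ioi, Set.mem_Ioc]
      exact ⟨fun ⟨h1', h2'⟩ => ⟨h1', h2'.2⟩,
        fun ⟨h1', h2'⟩ => ⟨h1', lt_of_le_of_lt ht.1 h1', h2'⟩⟩
    have h4 : (ν (Set.Ioc t d)).toReal = S d - S t := by
      rw [hνdef, S.measure_Ioc, ENNReal.toReal_ofReal (sub_nonneg.2 (S.mono ht.2))]
    rw [h1, h2, h3, h4]
  have key3 : (∫ t, (∫ y, e t y ∂μ2) ∂μ1) = ∫ y, (∫ t, e t y ∂μ1) ∂μ2 :=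
    integral_integral_swap he_int
  have key4 : (∫ y, (∫ t, e t y ∂μ1) ∂μ2) = ∫ y, F y ∂μ2 := by
    refine setIntegral_congr_fun measurableSet_Ioc ?_
    intro y hy
    dsimp only
    have h1 : (fun t => e t y) = fun t => (Set.Iio y).indicator f t := by
      ext t
      simp only [hedef, Set.indicator_apply, Set.mem_Iio]
      split <;> simp
    rw [h1]
    have h2 : (∫ t, (Set.Iio y).indicator f t ∂μ1)
        = ∫ t in Set.Icc c d ∩ Set.Iio y, f t := by
      rw [hμ1def]
      exact setIntegral_indicator measurableSet_Iio
    rw [h2]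
    have h3 : Set.Icc c d ∩ Set.Iio y = Set.Ico c y := by
      ext t
      simp only [Set.mem_inter_iff, Set.mem_Icc, Set.mem_Iio, Set.mem_Ico]
      exact ⟨fun ⟨h1', h2'⟩ => ⟨h1'.1, h2'⟩,
        fun ⟨h1', h2'⟩ => ⟨⟨h1', le_of_lt (lt_of_lt_of_le h2' hy.2)⟩, h2'⟩⟩
    rw [h3]
    exact setIntegral_congr_set Ico_ae_eq_Icc
  have key : (∫ t in Set.Icc c d, f t * g t) = ∫ y, F y ∂μ2 := by
    rw [key1, key2, key3, key4]
  -- part 1: nonnegativity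
  have hpos' : 0 ≤ ∫ y, F y ∂μ2 := by
    rw [hμ2def]
    exact setIntegral_nonneg measurableSet_Ioc fun y hy =>
      hpos y ⟨le_of_lt hy.1, hy.2⟩
  refine ⟨key ▸ hpos', ?_⟩
  constructor
  · -- equality → g constant on Ioo c d
    intro h0
    rw [key] at h0
    -- F is continuous on Icc, hence a.e. strongly measurable wrt μ2
    have hFcont : ContinuousOn F (Set.Icc c d) :=
      intervalIntegral.continuousOn_primitive_Icc hfi
    have hFint : Integrable F μ2 := by
      refine Integrable.mono' (integrable_const (M * (volume (Set.Icc c d)).toReal))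
        ((hFcont.mono Set.Ioc_subset_Icc_self).aestronglyMeasurable
          measurableSet_Ioc) ?_
      rw [hμ2def]
      refine (ae_restrict_iff' measurableSet_Ioc).2 (ae_of_all _ fun y hy => ?_)
      have hsub : Set.Icc c y ⊆ Set.Icc c d :=
        Set.Icc_subset_Icc le_rfl hy.2
      calc ‖F y‖ ≤ M * (volume (Set.Icc c y)).toReal := by
            refine norm_setIntegral_le_of_norm_le_const_ae' measure_Icc_lt_top
              (ae_of_all _ fun t ht => ?_)
            simpa [Real.norm_eq_abs] using hM t (hsub ht)
        _ ≤ M * (volume (Set.Icc c d)).toReal := by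
            refine mul_le_mul le_rfl ?_ ENNReal.toReal_nonneg hMnn
            exact ENNReal.toReal_mono measure_Icc_lt_top.ne (measure_mono hsub)
    have hF0ae : F =ᵐ[μ2] 0 := by
      refine (integral_eq_zero_iff_of_nonneg_ae ?_ hFint).1 h0
      rw [hμ2def]
      exact (ae_restrict_iff' measurableSet_Ioc).2 (ae_of_all _ fun y hy =>
        hpos y ⟨le_of_lt hy.1, hy.2⟩)
    have hIoo_null : ν (Set.Ioo c d) = 0 := by
      have hsub : Set.Ioo c d ⊆ {y | ¬ F y = 0} := by
        intro y hy hy0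
        rcases (heq y ⟨le_of_lt hy.1, le_of_lt hy.2⟩).1 hy0 with h' | h'
        · exact absurd h' (ne_of_gt hy.1)
        · exact absurd h' (ne_of_lt hy.2)
      have := hF0ae
      rw [Filter.EventuallyEq, MeasureTheory.ae_iff] at this
      have hnull : μ2 (Set.Ioo c d) = 0 := by
        refine measure_mono_null ?_ this
        intro y hy
        simpa using hsub hy
      rw [hμ2def, Measure.restrict_apply measurableSet_Ioo] at hnull
      rwa [Set.inter_eq_self_of_subset_left
        (fun y hy => Set.Ioo_subset_Ioc_self hy)] at hnull
    have hSconst : ∀ y ∈ Set.Ioo c d, S y = S c := by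
      intro y hy
      have h1 : ν (Set.Ioc c y) = 0 := by
        refine measure_mono_null ?_ hIoo_null
        intro t ht
        exact ⟨ht.1, lt_of_le_of_lt ht.2 hy.2⟩
      rw [hνdef, S.measure_Ioc, ENNReal.ofReal_eq_zero] at h1
      exact le_antisymm (by linarith) (S.mono (le_of_lt hy.1))
    have hhconst : ∀ x ∈ Set.Ioo c d, h x = S c := by
      intro x hx
      have hup : h x ≤ S c := by
        have := hmono.le_rightLim (le_refl x)
        rw [← hS x] at this
        exact this.trans (le_of_eq (hSconst x hx))
      have hdown : S c ≤ h x := by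
        set w := (c + x) / 2 with hwdef
        have hw1 : c < w := by rw [hwdef]; linarith [hx.1]
        have hw2 : w < x := by rw [hwdef]; linarith [hx.1]
        have hwIoo : w ∈ Set.Ioo c d := ⟨hw1, lt_trans hw2 hx.2⟩
        have := hmono.rightLim_le hw2
        rw [← hS w, hSconst w hwIoo] at this
        exact this
      linarith
    intro x hx y hy
    have hx' : g x = -h x := by
      simp only [hhdef]
      rw [hτeq x ⟨le_of_lt hx.1, le_of_lt hx.2⟩, neg_neg]
    have hy' : g y = -h y := by
      simp only [hhdef]
      rw [hτeq y ⟨le_of_lt hy.1, le_of_lt hy.2⟩, neg_neg]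
    rw [hx', hy', hhconst x hx, hhconst y hy]
  · -- g constant on Ioo c d → integral = 0
    intro hconst
    have hmid : (c + d) / 2 ∈ Set.Ioo c d := ⟨by linarith, by linarith⟩
    set K := g ((c + d) / 2) with hKdef
    have h1 : (∫ t in Set.Icc c d, f t * g t) = ∫ t in Set.Ioo c d, f t * g t :=
      (setIntegral_congr_set Ioo_ae_eq_Icc).symm
    have h2 : (∫ t in Set.Ioo c d, f t * g t) = ∫ t in Set.Ioo c d, f t * K := by
      refine setIntegral_congr_fun measurableSet_Ioo fun t ht => ?_
      rw [hconst t ht ((c + d) / 2) hmid]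
    have h3 : (∫ t in Set.Ioo c d, f t * K) = (∫ t in Set.Ioo c d, f t) * K :=
      integral_mul_const _ _
    have h4 : (∫ t in Set.Ioo c d, f t) = F d :=
      setIntegral_congr_set Ioo_ae_eq_Icc
    rw [h1, h2, h3, h4, hFd, zero_mul]
end

section
/- For g positive, bounded, continuous, nonincreasing on (0,1) and fixed 0 ≤ a < 1, 0 ≤ c < b ≤ 1 with a ≠ b, a ≠ c, the equation F_g(r,a,b,c) = 0 (in r) has a unique positive solution q(g); moreover q(g) ≤ q(1) = ρ(a,b,c), with equality if and only if g is constant on (min(a,c), max(a,b)). -/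
noncomputable def rho (a b c : ℝ) : ℝ := if a < 1 then xi a b / xi a c else (1 - b) / (1 - c)

noncomputable def Fg (g : ℝ → ℝ) (r a b c : ℝ) : ℝ :=
  (∫ t in b..a, (b - t) / (1 - t) * g t) - r * ∫ t in c..a, (c - t) / (1 - t) * g t

open MeasureTheory Set


lemma integrableOn_Ioo_of_bdd {f : ℝ → ℝ} {x y M : ℝ}
    (hcont : ContinuousOn f (Set.Ioo x y)) (hM : ∀ t ∈ Set.Ioo x y, |f t| ≤ M) :
    IntegrableOn f (Set.Ioo x y) := by
  have hmeas : AEStronglyMeasurable f (volume.restrict (Ioo x y)) :=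
    (hcont.aemeasurable measurableSet_Ioo).aestronglyMeasurable
  refine Integrable.mono' (g := fun _ => M) (integrableOn_const (C := M) measure_Ioo_lt_top.ne) hmeas ?_
  exact (ae_restrict_iff' measurableSet_Ioo).mpr (Filter.Eventually.of_forall fun t ht => hM t ht)

lemma intervalIntegrable_of_Ioo {f : ℝ → ℝ} {x y : ℝ} (hxy : x ≤ y)
    (h : IntegrableOn f (Set.Ioo x y)) : IntervalIntegrable f volume x y := by
  rw [intervalIntegrable_iff, uIoc_of_le hxy]
  exact h.congr_set_ae Ioo_ae_eq_Ioc.symm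

lemma intervalIntegral_eq_Ioo (f : ℝ → ℝ) {x y : ℝ} (hxy : x ≤ y) :
    (∫ t in x..y, f t) = ∫ t in Set.Ioo x y, f t := by
  rw [intervalIntegral.integral_of_le hxy, integral_Ioc_eq_integral_Ioo]

lemma integral_Ioo_split (f : ℝ → ℝ) {x y z : ℝ} (hxy : x ≤ y) (hyz : y ≤ z)
    (hf : IntegrableOn f (Set.Ioo x z)) :
    ∫ t in Set.Ioo x z, f t = (∫ t in Set.Ioo x y, f t) + ∫ t in Set.Ioo y z, f t := by
  have hIoc : IntegrableOn f (Set.Ioc x z) := hf.congr_set_ae Ioo_ae_eq_Ioc.symm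
  have h1 : IntegrableOn f (Set.Ioc x y) := hIoc.mono_set (Ioc_subset_Ioc_right hyz)
  have h2 : IntegrableOn f (Set.Ioc y z) := hIoc.mono_set (Ioc_subset_Ioc_left hxy)
  rw [setIntegral_congr_set Ioo_ae_eq_Ioc, ← Ioc_union_Ioc_eq_Ioc hxy hyz,
    setIntegral_union (Ioc_disjoint_Ioc_of_le le_rfl) measurableSet_Ioc h1 h2,
    integral_Ioc_eq_integral_Ioo, integral_Ioc_eq_integral_Ioo]

lemma integrableOn_Ioo_join {f : ℝ → ℝ} {x y z : ℝ} (hxy : x ≤ y) (hyz : y ≤ z)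
    (h1 : IntegrableOn f (Set.Ioo x y) volume) (h2 : IntegrableOn f (Set.Ioo y z) volume) :
    IntegrableOn f (Set.Ioo x z) volume := by
  have := (h1.congr_set_ae Ioo_ae_eq_Ioc.symm).union (h2.congr_set_ae Ioo_ae_eq_Ioc.symm)
  rw [Set.Ioc_union_Ioc_eq_Ioc hxy hyz] at this
  exact this.congr_set_ae Ioo_ae_eq_Ioc

section
variable {f : ℝ → ℝ}

-- bound when the interval ends at s (t < y ≤ s ≤ 1)
lemma phi_bd1 {s x y : ℝ} (hys : y ≤ s) (hs1 : s ≤ 1) :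
    ∀ t ∈ Set.Ioo x y, |(s - t) / (1 - t)| ≤ 1 := by
  intro t ht
  have h1 : 0 < 1 - t := by linarith [ht.2]
  rw [abs_div, abs_of_pos h1, div_le_one h1, abs_of_pos (by linarith [ht.2] : 0 < s - t)]
  linarith
-- bound when right endpoint y < 1 and 0 ≤ x
lemma phi_bd2 {s x y : ℝ} (hx : 0 ≤ x) (hy : y < 1) :
    ∀ t ∈ Set.Ioo x y, |(s - t) / (1 - t)| ≤ (|s| + 1) / (1 - y) := by
  intro t ht
  have h1 : 0 < 1 - t := by linarith [ht.2]
  have h2 : 0 < 1 - y := by linarith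
  rw [abs_div, abs_of_pos h1, div_le_div_iff₀ h1 h2]
  have h3 : |s - t| ≤ |s| + 1 := by
    have := abs_sub_abs_le_abs_sub s t
    have h4 : |t| ≤ 1 := abs_le.mpr ⟨by linarith [ht.1], by linarith [ht.2]⟩
    calc |s - t| ≤ |s| + |t| := abs_sub_le_iff.mpr ⟨by cases abs_cases t with
        | inl h => cases abs_cases s with
          | inl hs => linarith [hs.1, h.1]
          | inr hs => linarith [hs.1, h.1]
        | inr h => cases abs_cases s with
          | inl hs => linarith [hs.1, h.1]
          | inr hs => linarith [hs.1, h.1], by cases abs_cases t with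
        | inl h => cases abs_cases s with
          | inl hs => linarith [hs.1, h.1]
          | inr hs => linarith [hs.1, h.1]
        | inr h => cases abs_cases s with
          | inl hs => linarith [hs.1, h.1]
          | inr hs => linarith [hs.1, h.1]⟩
    _ ≤ |s| + 1 := by linarith
  nlinarith [mul_le_mul_of_nonneg_right h3 h2.le, ht.2, abs_nonneg s]
end

lemma W_intOn {g : ℝ → ℝ} {M : ℝ} (hM : ∀ t ∈ Set.Ioo (0:ℝ) 1, |g t| ≤ M)
    (hgc : ContinuousOn g (Set.Ioo 0 1)) {s x y B : ℝ} (hx : 0 ≤ x) (hy : y ≤ 1)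
    (hB : ∀ t ∈ Set.Ioo x y, |(s - t) / (1 - t)| ≤ B) :
    IntegrableOn (fun t => (s - t) / (1 - t) * g t) (Set.Ioo x y) volume := by
  have hsub : Set.Ioo x y ⊆ Set.Ioo (0:ℝ) 1 := Set.Ioo_subset_Ioo hx hy
  have hcont : ContinuousOn (fun t => (s - t) / (1 - t) * g t) (Set.Ioo x y) := by
    refine ContinuousOn.mul (ContinuousOn.div
      (continuous_const.sub continuous_id).continuousOn
      (continuous_const.sub continuous_id).continuousOn ?_) (hgc.mono hsub)
    intro t ht
    have h1 : t < 1 := lt_of_lt_of_le ht.2 hy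
    show (fun t : ℝ => (1:ℝ) - t) t ≠ 0
    exact sub_ne_zero.mpr (by norm_num; linarith)
  refine integrableOn_Ioo_of_bdd hcont (M := B * M) ?_
  intro t ht
  rw [abs_mul]
  have h1 := hB t ht
  have h2 := hM t (hsub ht)
  have h0 := abs_nonneg ((s - t) / (1 - t))
  nlinarith [abs_nonneg (g t)]

lemma J_pos_int {g : ℝ → ℝ} {M : ℝ}
    (hgpos : ∀ t ∈ Set.Ioo (0:ℝ) 1, 0 < g t)
    (hM : ∀ t ∈ Set.Ioo (0:ℝ) 1, |g t| ≤ M)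
    (hgc : ContinuousOn g (Set.Ioo 0 1))
    {a s : ℝ} (ha : 0 ≤ a) (ha1 : a < 1) (hs0 : 0 ≤ s) (hs1 : s ≤ 1) (hne : a ≠ s) :
    IntervalIntegrable (fun t => (s - t) / (1 - t) * g t) volume a s ∧
    0 < ∫ t in a..s, (s - t) / (1 - t) * g t := by
  rcases lt_or_gt_of_ne hne with h | h
  · have hint := W_intOn hM hgc ha hs1 (phi_bd1 le_rfl hs1)
    have hII := intervalIntegrable_of_Ioo h.le hint
    refine ⟨hII, intervalIntegral.intervalIntegral_pos_of_pos_on hII ?_ h⟩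
    intro t ht
    have ht01 : t ∈ Set.Ioo (0:ℝ) 1 := ⟨lt_of_le_of_lt ha ht.1, lt_of_lt_of_le ht.2 hs1⟩
    exact mul_pos (div_pos (by linarith [ht.2]) (by linarith [ht01.2])) (hgpos t ht01)
  · -- s < a
    have hint := W_intOn hM hgc hs0 ha1.le (phi_bd2 (s := s) hs0 ha1)
    have hII := intervalIntegrable_of_Ioo h.le hint
    refine ⟨hII.symm, ?_⟩
    rw [intervalIntegral.integral_symm]
    have hneg : (∫ t in s..a, (s - t) / (1 - t) * g t) < 0 := by
      have hpos : 0 < ∫ t in s..a, -((s - t) / (1 - t) * g t) := by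
        refine intervalIntegral.intervalIntegral_pos_of_pos_on hII.neg ?_ h
        intro t ht
        have ht01 : t ∈ Set.Ioo (0:ℝ) 1 := ⟨lt_of_le_of_lt hs0 ht.1, lt_trans ht.2 ha1⟩
        have : (s - t) / (1 - t) < 0 :=
          div_neg_of_neg_of_pos (by linarith [ht.1]) (by linarith [ht01.2])
        nlinarith [hgpos t ht01]
      rw [intervalIntegral.integral_neg] at hpos
      linarith
    linarith

lemma xi_integral {a s : ℝ} (ha1 : a < 1) (hs1 : s ≤ 1) :
    (∫ t in a..s, (s - t) / (1 - t)) = xi a s := by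
  rcases eq_or_lt_of_le hs1 with rfl | hs1'
  · -- s = 1
    have h : (∫ t in a..(1:ℝ), (1 - t) / (1 - t)) = ∫ t in a..(1:ℝ), (1:ℝ) := by
      refine intervalIntegral.integral_congr_ae ?_
      have hae : ∀ᵐ (t : ℝ), t ≠ (1:ℝ) := by
        refine MeasureTheory.ae_iff.mpr ?_
        simp
      filter_upwards [hae] with t hne _
      rw [div_self (sub_ne_zero.mpr (Ne.symm hne))]
    rw [h, intervalIntegral.integral_const]
    simp [xi, zeta]
  · -- s < 1
    have hmax : max a s < 1 := max_lt ha1 hs1'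
    have hderiv : ∀ t ∈ Set.uIcc a s,
        HasDerivAt (fun t => t + (1 - s) * Real.log (1 - t)) ((s - t) / (1 - t)) t := by
      intro t ht
      have ht1 : t < 1 := lt_of_le_of_lt ht.2 hmax
      have hne : (1:ℝ) - t ≠ 0 := sub_ne_zero.mpr (by linarith)
      have hlog : HasDerivAt (fun t : ℝ => Real.log (1 - t)) (-1 / (1 - t)) t :=
        HasDerivAt.log ((hasDerivAt_id t).const_sub 1) hne
      have h2 := (hasDerivAt_id t).add (hlog.const_mul (1 - s))
      have heq : 1 + (1 - s) * (-1 / (1 - t)) = (s - t) / (1 - t) := by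
        rw [eq_div_iff hne]
        field_simp
        ring
      rw [← heq]
      exact h2
    have hint : IntervalIntegrable (fun t => (s - t) / (1 - t)) volume a s := by
      refine ContinuousOn.intervalIntegrable ?_
      refine ContinuousOn.div (continuous_const.sub continuous_id).continuousOn
        (continuous_const.sub continuous_id).continuousOn ?_
      intro t ht
      have ht1 : t ≤ max a s := ht.2
      show (fun t : ℝ => (1:ℝ) - t) t ≠ 0
      exact sub_ne_zero.mpr (ne_of_lt (lt_of_le_of_lt ht1 hmax)).symm
    rw [intervalIntegral.integral_eq_sub_of_hasDerivAt hderiv hint]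
    simp only [xi, zeta]
lemma core {g K : ℝ → ℝ} {u v m : ℝ} (hu : 0 ≤ u) (hv : v ≤ 1) (hum : u < m) (hmv : m < v)
    (hKint : IntegrableOn K (Set.Ioo u v))
    (hKgint : IntegrableOn (fun t => K t * g t) (Set.Ioo u v))
    (hK0 : ∫ t in Set.Ioo u v, K t = 0)
    (hKpos : ∀ t ∈ Set.Ioo u m, 0 < K t) (hKneg : ∀ t ∈ Set.Ioo m v, K t < 0)
    (hgm : AntitoneOn g (Set.Ioo 0 1)) :
    (0 ≤ ∫ t in Set.Ioo u v, K t * g t) ∧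
    ((∫ t in Set.Ioo u v, K t * g t) = 0 → ∀ t ∈ Set.Ioo u v, g t = g m) := by
  have hsub : Set.Ioo u v ⊆ Set.Ioo (0:ℝ) 1 := Set.Ioo_subset_Ioo hu hv
  have hm01 : m ∈ Set.Ioo (0:ℝ) 1 := hsub ⟨hum, hmv⟩
  set D : ℝ → ℝ := fun t => K t * (g t - g m) with hD
  have hDeq : ∀ t, D t = K t * g t - K t * g m := fun t => by simp only [hD]; ring
  have hDint : IntegrableOn D (Set.Ioo u v) := by
    have h : IntegrableOn (fun t => K t * g t - K t * g m) (Set.Ioo u v) :=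
      hKgint.sub (hKint.mul_const (g m))
    exact h.congr_fun (fun t _ => (hDeq t).symm) measurableSet_Ioo
  have hpt : ∀ t ∈ Set.Ioo u v, 0 ≤ D t := by
    intro t ht
    rcases lt_trichotomy t m with h | h | h
    · exact mul_nonneg (hKpos t ⟨ht.1, h⟩).le
        (sub_nonneg.mpr (hgm (hsub ht) hm01 h.le))
    · simp [hD, h]
    · have h1 : g t ≤ g m := hgm hm01 (hsub ht) h.le
      have h2 := hKneg t ⟨h, ht.2⟩
      simp only [hD]
      nlinarith
  have hIeq : ∫ t in Set.Ioo u v, D t = ∫ t in Set.Ioo u v, K t * g t := by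
    simp_rw [hDeq]
    rw [integral_sub hKgint (hKint.mul_const (g m)), integral_mul_const, hK0, zero_mul, sub_zero]
  have hnn : 0 ≤ ∫ t in Set.Ioo u v, K t * g t := by
    rw [← hIeq]; exact setIntegral_nonneg measurableSet_Ioo hpt
  refine ⟨hnn, ?_⟩
  intro hzero t₀ ht₀
  by_contra hne
  have hDzero : ∫ t in Set.Ioo u v, D t = 0 := by rw [hIeq, hzero]
  -- find a subinterval [x,y] ⊆ [u,v] where ∫ D > 0
  obtain ⟨x, y, hux, hxy, hyv, hposint⟩ :
      ∃ x y, u ≤ x ∧ x < y ∧ y ≤ v ∧ 0 < ∫ t in Set.Ioo x y, D t := by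
    rcases lt_trichotomy t₀ m with h | h | h
    · -- t₀ < m, g t₀ > g m
      have hgt : g m < g t₀ :=
        lt_of_le_of_ne (hgm (hsub ht₀) hm01 h.le) (Ne.symm hne)
      set ε : ℝ := g t₀ - g m with hε
      have hεpos : 0 < ε := sub_pos.mpr hgt
      refine ⟨(u + t₀) / 2, t₀, by linarith [ht₀.1], by linarith [ht₀.1], le_of_lt (lt_of_lt_of_le h hmv.le), ?_⟩
      have hss : Set.Ioo ((u + t₀) / 2) t₀ ⊆ Set.Ioo u v :=
        Set.Ioo_subset_Ioo (by linarith [ht₀.1]) ht₀.2.le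
      have hssm : Set.Ioo ((u + t₀) / 2) t₀ ⊆ Set.Ioo u m :=
        Set.Ioo_subset_Ioo (by linarith [ht₀.1]) h.le
      have hKsub : IntegrableOn K (Set.Ioo ((u + t₀) / 2) t₀) := hKint.mono_set hss
      have hKIpos : 0 < ∫ t in Set.Ioo ((u + t₀) / 2) t₀, K t := by
        rw [← intervalIntegral_eq_Ioo K (by linarith [ht₀.1])]
        exact intervalIntegral.intervalIntegral_pos_of_pos_on
          (intervalIntegrable_of_Ioo (by linarith [ht₀.1]) hKsub)
          (fun s hs => hKpos s (hssm hs)) (by linarith [ht₀.1])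
      have hmono : (∫ t in Set.Ioo ((u + t₀) / 2) t₀, K t * ε)
          ≤ ∫ t in Set.Ioo ((u + t₀) / 2) t₀, D t := by
        refine setIntegral_mono_on (hKsub.mul_const ε) (hDint.mono_set hss)
          measurableSet_Ioo ?_
        intro s hs
        have hK := hKpos s (hssm hs)
        have hgs : g t₀ ≤ g s := hgm (hsub (hss hs)) (hsub ht₀) hs.2.le
        simp only [hD]
        nlinarith
      calc (0:ℝ) < (∫ t in Set.Ioo ((u + t₀) / 2) t₀, K t) * ε := mul_pos hKIpos hεpos
        _ = ∫ t in Set.Ioo ((u + t₀) / 2) t₀, K t * ε := (integral_mul_const ε K).symm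
        _ ≤ _ := hmono
    · exact absurd (by rw [h]) hne
    · -- m < t₀, g t₀ < g m
      have hgt : g t₀ < g m :=
        lt_of_le_of_ne (hgm hm01 (hsub ht₀) h.le) hne
      set ε : ℝ := g m - g t₀ with hε
      have hεpos : 0 < ε := sub_pos.mpr hgt
      refine ⟨t₀, (t₀ + v) / 2, ht₀.1.le, by linarith [ht₀.2], by linarith [ht₀.2], ?_⟩
      have hss : Set.Ioo t₀ ((t₀ + v) / 2) ⊆ Set.Ioo u v :=
        Set.Ioo_subset_Ioo ht₀.1.le (by linarith [ht₀.2])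
      have hssm : Set.Ioo t₀ ((t₀ + v) / 2) ⊆ Set.Ioo m v :=
        Set.Ioo_subset_Ioo h.le (by linarith [ht₀.2])
      have hKsub : IntegrableOn K (Set.Ioo t₀ ((t₀ + v) / 2)) := hKint.mono_set hss
      have hKIpos : 0 < ∫ t in Set.Ioo t₀ ((t₀ + v) / 2), -K t := by
        rw [← intervalIntegral_eq_Ioo (fun t => -K t) (by linarith [ht₀.2])]
        exact intervalIntegral.intervalIntegral_pos_of_pos_on
          (intervalIntegrable_of_Ioo (by linarith [ht₀.2]) hKsub.neg)
          (fun s hs => neg_pos.mpr (hKneg s (hssm hs))) (by linarith [ht₀.2])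
      have hmono : (∫ t in Set.Ioo t₀ ((t₀ + v) / 2), (-K t) * ε)
          ≤ ∫ t in Set.Ioo t₀ ((t₀ + v) / 2), D t := by
        refine setIntegral_mono_on (hKsub.neg.mul_const ε) (hDint.mono_set hss)
          measurableSet_Ioo ?_
        intro s hs
        have hK := hKneg s (hssm hs)
        have hgs : g s ≤ g t₀ := hgm (hsub ht₀) (hsub (hss hs)) hs.1.le
        simp only [hD]
        nlinarith
      calc (0:ℝ) < (∫ t in Set.Ioo t₀ ((t₀ + v) / 2), -K t) * ε := mul_pos hKIpos hεpos
        _ = ∫ t in Set.Ioo t₀ ((t₀ + v) / 2), (-K t) * ε :=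
          (integral_mul_const ε (fun t => -K t)).symm
        _ ≤ _ := hmono
  -- combine
  have h1 := integral_Ioo_split D hux (hxy.le.trans hyv) hDint
  have h2 := integral_Ioo_split D hxy.le hyv (hDint.mono_set (Set.Ioo_subset_Ioo hux le_rfl))
  have hA : 0 ≤ ∫ t in Set.Ioo u x, D t :=
    setIntegral_nonneg measurableSet_Ioo
      (fun s hs => hpt s ⟨hs.1, lt_of_lt_of_le hs.2 (hxy.le.trans hyv)⟩)
  have hB : 0 ≤ ∫ t in Set.Ioo y v, D t :=
    setIntegral_nonneg measurableSet_Ioo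
      (fun s hs => hpt s ⟨lt_of_le_of_lt (hux.trans hxy.le) hs.1, hs.2⟩)
  linarith
section cases
variable {g : ℝ → ℝ} {M : ℝ}

lemma case1_main
    (hgpos : ∀ t ∈ Set.Ioo (0:ℝ) 1, 0 < g t)
    (hM : ∀ t ∈ Set.Ioo (0:ℝ) 1, |g t| ≤ M)
    (hgc : ContinuousOn g (Set.Ioo 0 1))
    (hgm : AntitoneOn g (Set.Ioo 0 1))
    {a b c xb xc : ℝ} (ha : 0 ≤ a) (hac : a < c) (hcb : c < b) (hb : b ≤ 1)
    (hxb : xb = ∫ t in a..b, (b - t) / (1 - t))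
    (hxc : xc = ∫ t in a..c, (c - t) / (1 - t))
    (hxbpos : 0 < xb) (hxcpos : 0 < xc) :
    0 ≤ xb * (∫ t in a..c, (c - t) / (1 - t) * g t)
        - xc * (∫ t in a..b, (b - t) / (1 - t) * g t) ∧
    (xb * (∫ t in a..c, (c - t) / (1 - t) * g t)
        - xc * (∫ t in a..b, (b - t) / (1 - t) * g t) = 0 →
      ∃ k, ∀ t ∈ Set.Ioo a b, g t = k) := by
  have hc0 : 0 ≤ c := le_trans ha hac.le
  have hc1 : c < 1 := lt_of_lt_of_le hcb hb
  set K : ℝ → ℝ := fun t => (xb * max (c - t) 0 - xc * (b - t)) / (1 - t) with hK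
  -- generic rewrite
  have rw1 : ∀ f : ℝ → ℝ,
      IntegrableOn (fun t => (c - t) / (1 - t) * f t) (Set.Ioo a c) volume →
      IntegrableOn (fun t => (b - t) / (1 - t) * f t) (Set.Ioo a c) volume →
      IntegrableOn (fun t => (b - t) / (1 - t) * f t) (Set.Ioo c b) volume →
      IntegrableOn (fun t => K t * f t) (Set.Ioo a b) volume ∧
      xb * (∫ t in a..c, (c - t) / (1 - t) * f t)
        - xc * (∫ t in a..b, (b - t) / (1 - t) * f t)
        = ∫ t in Set.Ioo a b, K t * f t := by
    intro f h1 h2 h3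
    have e1 : Set.EqOn (fun t => xb * ((c - t) / (1 - t) * f t) - xc * ((b - t) / (1 - t) * f t))
        (fun t => K t * f t) (Set.Ioo a c) := by
      intro t ht
      simp only [hK]
      rw [max_eq_left (by linarith [ht.2] : (0:ℝ) ≤ c - t)]
      ring
    have e2 : Set.EqOn (fun t => -(xc * ((b - t) / (1 - t) * f t)))
        (fun t => K t * f t) (Set.Ioo c b) := by
      intro t ht
      simp only [hK]
      rw [max_eq_right (by linarith [ht.1] : c - t ≤ (0:ℝ))]
      ring
    have hcomb1 : IntegrableOn
        (fun t => xb * ((c - t) / (1 - t) * f t) - xc * ((b - t) / (1 - t) * f t))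
        (Set.Ioo a c) volume := (h1.const_mul xb).sub (h2.const_mul xc)
    have hcomb2 : IntegrableOn (fun t => -(xc * ((b - t) / (1 - t) * f t)))
        (Set.Ioo c b) volume := (h3.const_mul xc).neg
    have hKf1 : IntegrableOn (fun t => K t * f t) (Set.Ioo a c) volume :=
      hcomb1.congr_fun e1 measurableSet_Ioo
    have hKf2 : IntegrableOn (fun t => K t * f t) (Set.Ioo c b) volume :=
      hcomb2.congr_fun e2 measurableSet_Ioo
    have hKf : IntegrableOn (fun t => K t * f t) (Set.Ioo a b) volume :=
      integrableOn_Ioo_join hac.le hcb.le hKf1 hKf2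
    refine ⟨hKf, ?_⟩
    have hsplit : (∫ t in a..b, (b - t) / (1 - t) * f t)
        = (∫ t in Set.Ioo a c, (b - t) / (1 - t) * f t)
          + ∫ t in Set.Ioo c b, (b - t) / (1 - t) * f t := by
      rw [← intervalIntegral_eq_Ioo _ hac.le, ← intervalIntegral_eq_Ioo _ hcb.le]
      exact (intervalIntegral.integral_add_adjacent_intervals
        (intervalIntegrable_of_Ioo hac.le h2) (intervalIntegrable_of_Ioo hcb.le h3)).symm
    have hI1 : ∫ t in Set.Ioo a c, K t * f t
        = xb * (∫ t in Set.Ioo a c, (c - t) / (1 - t) * f t)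
          - xc * (∫ t in Set.Ioo a c, (b - t) / (1 - t) * f t) := by
      rw [← setIntegral_congr_fun measurableSet_Ioo e1,
        integral_sub (h1.const_mul xb) (h2.const_mul xc), integral_const_mul, integral_const_mul]
    have hI2 : ∫ t in Set.Ioo c b, K t * f t
        = -(xc * ∫ t in Set.Ioo c b, (b - t) / (1 - t) * f t) := by
      rw [← setIntegral_congr_fun measurableSet_Ioo e2, integral_neg, integral_const_mul]
    rw [integral_Ioo_split _ hac.le hcb.le hKf, hI1, hI2, hsplit,
      intervalIntegral_eq_Ioo _ hac.le]
    ring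
  -- integrability facts
  have h1g := W_intOn hM hgc ha hc1.le (phi_bd1 (x := a) le_rfl hc1.le)
  have h2g := W_intOn hM hgc ha hc1.le (phi_bd1 (x := a) hcb.le hb)
  have h3g := W_intOn hM hgc hc0 hb (phi_bd1 (x := c) le_rfl hb)
  have hM1 : ∀ t ∈ Set.Ioo (0:ℝ) 1, |(fun _ : ℝ => (1:ℝ)) t| ≤ 1 := by intro t _; simp
  have h11 := W_intOn hM1 continuousOn_const ha hc1.le (phi_bd1 (x := a) le_rfl hc1.le)
  have h21 := W_intOn hM1 continuousOn_const ha hc1.le (phi_bd1 (x := a) hcb.le hb)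
  have h31 := W_intOn hM1 continuousOn_const hc0 hb (phi_bd1 (x := c) le_rfl hb)
  obtain ⟨hKgint, hEg⟩ := rw1 g h1g h2g h3g
  obtain ⟨hK1int, hE1⟩ := rw1 (fun _ => 1) h11 h21 h31
  simp only [mul_one] at hE1 hK1int
  have hK0 : ∫ t in Set.Ioo a b, K t = 0 := by
    rw [← hE1, ← hxb, ← hxc]; ring
  have hKint : IntegrableOn K (Set.Ioo a b) volume := hK1int
  -- sign analysis
  have hKneg2 : ∀ t ∈ Set.Ioo c b, K t < 0 := by
    intro t ht
    simp only [hK]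
    rw [max_eq_right (by linarith [ht.1] : c - t ≤ (0:ℝ))]
    apply div_neg_of_neg_of_pos
    · nlinarith [ht.2, mul_pos hxcpos (by linarith [ht.2] : (0:ℝ) < b - t)]
    · have : t < 1 := lt_of_lt_of_le ht.2 hb
      linarith
  by_cases hha : 0 < xb * (c - a) - xc * (b - a)
  · -- main subcase: crossing point m in (a, c)
    have hd : 0 < xb - xc := by nlinarith [mul_pos hxcpos (sub_pos.mpr hcb)]
    set m : ℝ := (xb * c - xc * b) / (xb - xc) with hm
    have hm' : m * (xb - xc) = xb * c - xc * b := div_mul_cancel₀ _ (ne_of_gt hd)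
    have hid : ∀ t : ℝ, xb * (c - t) - xc * (b - t) = (m - t) * (xb - xc) := by
      intro t; linear_combination -hm'
    have ham : a < m := by nlinarith [hid a]
    have hmc : m < c := by nlinarith [hid c, mul_pos hxcpos (sub_pos.mpr hcb)]
    have hKpos : ∀ t ∈ Set.Ioo a m, 0 < K t := by
      intro t ht
      simp only [hK]
      rw [max_eq_left (by linarith [ht.2] : (0:ℝ) ≤ c - t)]
      have h1t : 0 < 1 - t := by linarith [ht.2]
      rw [hid t]
      exact div_pos (mul_pos (by linarith [ht.2]) hd) h1t
    have hKneg : ∀ t ∈ Set.Ioo m b, K t < 0 := by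
      intro t ht
      rcases le_or_gt t c with h | h
      · simp only [hK]
        rw [max_eq_left (by linarith : (0:ℝ) ≤ c - t), hid t]
        have h1t : 0 < 1 - t := by linarith
        exact div_neg_of_neg_of_pos (mul_neg_of_neg_of_pos (by linarith [ht.1]) hd) h1t
      · exact hKneg2 t ⟨h, ht.2⟩
    have hcore := core (g := g) ha hb ham (lt_trans hmc hcb)
      hKint hKgint hK0 hKpos hKneg hgm
    constructor
    · rw [hEg]; exact hcore.1
    · intro h0; rw [hEg] at h0; exact ⟨g m, hcore.2 h0⟩
  · -- degenerate subcase: K ≤ 0 everywhere, contradiction with hK0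
    exfalso
    push_neg at hha
    have hKn1 : ∀ t ∈ Set.Ioo a c, K t ≤ 0 := by
      intro t ht
      simp only [hK]
      rw [max_eq_left (by linarith [ht.2] : (0:ℝ) ≤ c - t)]
      have h1t : 0 < 1 - t := by linarith [ht.2]
      refine div_nonpos_of_nonpos_of_nonneg ?_ h1t.le
      have hidt : (xb * (c - t) - xc * (b - t)) * (c - a)
          = (c - t) * (xb * (c - a) - xc * (b - a)) + (t - a) * (-(xc * (b - c))) := by
        ring
      nlinarith [ht.1, ht.2, mul_pos hxcpos (sub_pos.mpr hcb),
        mul_nonneg (by linarith [ht.2] : (0:ℝ) ≤ c - t) (by linarith : (0:ℝ) ≤ -(xb * (c - a) - xc * (b - a)))]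
    have hIac : ∫ t in Set.Ioo a c, K t ≤ 0 := setIntegral_nonpos measurableSet_Ioo hKn1
    have hKcb : IntegrableOn K (Set.Ioo c b) volume :=
      hKint.mono_set (Set.Ioo_subset_Ioo hac.le le_rfl)
    have hIcb : (∫ t in Set.Ioo c b, K t) < 0 := by
      have hpos : 0 < ∫ t in c..b, -K t :=
        intervalIntegral.intervalIntegral_pos_of_pos_on
          (intervalIntegrable_of_Ioo hcb.le hKcb.neg)
          (fun t ht => neg_pos.mpr (hKneg2 t ht)) hcb
      rw [intervalIntegral_eq_Ioo _ hcb.le, integral_neg] at hpos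
      linarith
    have := integral_Ioo_split K hac.le hcb.le hKint
    linarith [hK0]


lemma case2_main
    (hM : ∀ t ∈ Set.Ioo (0:ℝ) 1, |g t| ≤ M)
    (hgc : ContinuousOn g (Set.Ioo 0 1))
    (hgm : AntitoneOn g (Set.Ioo 0 1))
    {a b c xb xc : ℝ} (hc0 : 0 ≤ c) (hca : c < a) (hab : a < b) (ha1 : a < 1) (hb : b ≤ 1)
    (hxb : xb = ∫ t in a..b, (b - t) / (1 - t))
    (hxc : xc = ∫ t in a..c, (c - t) / (1 - t))
    (hxbpos : 0 < xb) (hxcpos : 0 < xc) :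
    0 ≤ xb * (∫ t in a..c, (c - t) / (1 - t) * g t)
        - xc * (∫ t in a..b, (b - t) / (1 - t) * g t) ∧
    (xb * (∫ t in a..c, (c - t) / (1 - t) * g t)
        - xc * (∫ t in a..b, (b - t) / (1 - t) * g t) = 0 →
      ∃ k, ∀ t ∈ Set.Ioo c b, g t = k) := by
  have ha0 : 0 ≤ a := le_trans hc0 hca.le
  set K : ℝ → ℝ := fun t =>
    if t ≤ a then xb * (t - c) / (1 - t) else xc * (t - b) / (1 - t) with hK
  have rw2 : ∀ f : ℝ → ℝ,
      IntegrableOn (fun t => (c - t) / (1 - t) * f t) (Set.Ioo c a) volume →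
      IntegrableOn (fun t => (b - t) / (1 - t) * f t) (Set.Ioo a b) volume →
      IntegrableOn (fun t => K t * f t) (Set.Ioo c b) volume ∧
      xb * (∫ t in a..c, (c - t) / (1 - t) * f t)
        - xc * (∫ t in a..b, (b - t) / (1 - t) * f t)
        = ∫ t in Set.Ioo c b, K t * f t := by
    intro f h1 h2
    have e1 : Set.EqOn (fun t => -(xb * ((c - t) / (1 - t) * f t)))
        (fun t => K t * f t) (Set.Ioo c a) := by
      intro t ht
      simp only [hK, if_pos ht.2.le]
      ring
    have e2 : Set.EqOn (fun t => -(xc * ((b - t) / (1 - t) * f t)))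
        (fun t => K t * f t) (Set.Ioo a b) := by
      intro t ht
      simp only [hK, if_neg (not_le.mpr ht.1)]
      ring
    have hcomb1 : IntegrableOn (fun t => -(xb * ((c - t) / (1 - t) * f t)))
        (Set.Ioo c a) volume := (h1.const_mul xb).neg
    have hcomb2 : IntegrableOn (fun t => -(xc * ((b - t) / (1 - t) * f t)))
        (Set.Ioo a b) volume := (h2.const_mul xc).neg
    have hKf1 : IntegrableOn (fun t => K t * f t) (Set.Ioo c a) volume :=
      hcomb1.congr_fun e1 measurableSet_Ioo
    have hKf2 : IntegrableOn (fun t => K t * f t) (Set.Ioo a b) volume :=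
      hcomb2.congr_fun e2 measurableSet_Ioo
    have hKf : IntegrableOn (fun t => K t * f t) (Set.Ioo c b) volume :=
      integrableOn_Ioo_join hca.le hab.le hKf1 hKf2
    refine ⟨hKf, ?_⟩
    have hI1 : ∫ t in Set.Ioo c a, K t * f t
        = -(xb * ∫ t in Set.Ioo c a, (c - t) / (1 - t) * f t) := by
      rw [← setIntegral_congr_fun measurableSet_Ioo e1, integral_neg, integral_const_mul]
    have hI2 : ∫ t in Set.Ioo a b, K t * f t
        = -(xc * ∫ t in Set.Ioo a b, (b - t) / (1 - t) * f t) := by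
      rw [← setIntegral_congr_fun measurableSet_Ioo e2, integral_neg, integral_const_mul]
    rw [integral_Ioo_split _ hca.le hab.le hKf, hI1, hI2,
      intervalIntegral.integral_symm c a, intervalIntegral_eq_Ioo _ hca.le,
      intervalIntegral_eq_Ioo _ hab.le]
    ring
  have hM1 : ∀ t ∈ Set.Ioo (0:ℝ) 1, |(fun _ : ℝ => (1:ℝ)) t| ≤ 1 := by intro t _; simp
  have h1g := W_intOn hM hgc hc0 ha1.le (phi_bd2 (s := c) hc0 ha1)
  have h2g := W_intOn hM hgc ha0 hb (phi_bd1 (x := a) le_rfl hb)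
  have h11 := W_intOn hM1 continuousOn_const hc0 ha1.le (phi_bd2 (s := c) hc0 ha1)
  have h21 := W_intOn hM1 continuousOn_const ha0 hb (phi_bd1 (x := a) le_rfl hb)
  obtain ⟨hKgint, hEg⟩ := rw2 g h1g h2g
  obtain ⟨hK1int, hE1⟩ := rw2 (fun _ => 1) h11 h21
  simp only [mul_one] at hE1 hK1int
  have hK0 : ∫ t in Set.Ioo c b, K t = 0 := by
    rw [← hE1, ← hxb, ← hxc]; ring
  have hKpos : ∀ t ∈ Set.Ioo c a, 0 < K t := by
    intro t ht
    simp only [hK, if_pos ht.2.le]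
    exact div_pos (mul_pos hxbpos (by linarith [ht.1])) (by linarith [ht.2])
  have hKneg : ∀ t ∈ Set.Ioo a b, K t < 0 := by
    intro t ht
    simp only [hK, if_neg (not_le.mpr ht.1)]
    exact div_neg_of_neg_of_pos (mul_neg_of_pos_of_neg hxcpos (by linarith [ht.2]))
      (by linarith [lt_of_lt_of_le ht.2 hb])
  have hcore := core (g := g) hc0 hb hca hab hK1int hKgint hK0 hKpos hKneg hgm
  constructor
  · rw [hEg]; exact hcore.1
  · intro h0; rw [hEg] at h0; exact ⟨g a, hcore.2 h0⟩

lemma case3_main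
    (hM : ∀ t ∈ Set.Ioo (0:ℝ) 1, |g t| ≤ M)
    (hgc : ContinuousOn g (Set.Ioo 0 1))
    (hgm : AntitoneOn g (Set.Ioo 0 1))
    {a b c xb xc : ℝ} (hc0 : 0 ≤ c) (hcb : c < b) (hba : b < a) (ha1 : a < 1)
    (hxb : xb = ∫ t in a..b, (b - t) / (1 - t))
    (hxc : xc = ∫ t in a..c, (c - t) / (1 - t))
    (hxbpos : 0 < xb) (hxcpos : 0 < xc) :
    0 ≤ xb * (∫ t in a..c, (c - t) / (1 - t) * g t)
        - xc * (∫ t in a..b, (b - t) / (1 - t) * g t) ∧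
    (xb * (∫ t in a..c, (c - t) / (1 - t) * g t)
        - xc * (∫ t in a..b, (b - t) / (1 - t) * g t) = 0 →
      ∃ k, ∀ t ∈ Set.Ioo c a, g t = k) := by
  have hb0 : 0 ≤ b := le_trans hc0 hcb.le
  have hb1 : b < 1 := lt_trans hba ha1
  set K : ℝ → ℝ := fun t => (xc * min (b - t) 0 - xb * (c - t)) / (1 - t) with hK
  have rw3 : ∀ f : ℝ → ℝ,
      IntegrableOn (fun t => (c - t) / (1 - t) * f t) (Set.Ioo c b) volume →
      IntegrableOn (fun t => (c - t) / (1 - t) * f t) (Set.Ioo b a) volume →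
      IntegrableOn (fun t => (b - t) / (1 - t) * f t) (Set.Ioo b a) volume →
      IntegrableOn (fun t => K t * f t) (Set.Ioo c a) volume ∧
      xb * (∫ t in a..c, (c - t) / (1 - t) * f t)
        - xc * (∫ t in a..b, (b - t) / (1 - t) * f t)
        = ∫ t in Set.Ioo c a, K t * f t := by
    intro f h1 h2 h3
    have e1 : Set.EqOn (fun t => -(xb * ((c - t) / (1 - t) * f t)))
        (fun t => K t * f t) (Set.Ioo c b) := by
      intro t ht
      simp only [hK]
      rw [min_eq_right (by linarith [ht.2] : (0:ℝ) ≤ b - t)]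
      ring
    have e2 : Set.EqOn
        (fun t => xc * ((b - t) / (1 - t) * f t) - xb * ((c - t) / (1 - t) * f t))
        (fun t => K t * f t) (Set.Ioo b a) := by
      intro t ht
      simp only [hK]
      rw [min_eq_left (by linarith [ht.1] : b - t ≤ (0:ℝ))]
      ring
    have hcomb1 : IntegrableOn (fun t => -(xb * ((c - t) / (1 - t) * f t)))
        (Set.Ioo c b) volume := (h1.const_mul xb).neg
    have hcomb2 : IntegrableOn
        (fun t => xc * ((b - t) / (1 - t) * f t) - xb * ((c - t) / (1 - t) * f t))
        (Set.Ioo b a) volume := (h3.const_mul xc).sub (h2.const_mul xb)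
    have hKf1 : IntegrableOn (fun t => K t * f t) (Set.Ioo c b) volume :=
      hcomb1.congr_fun e1 measurableSet_Ioo
    have hKf2 : IntegrableOn (fun t => K t * f t) (Set.Ioo b a) volume :=
      hcomb2.congr_fun e2 measurableSet_Ioo
    have hKf : IntegrableOn (fun t => K t * f t) (Set.Ioo c a) volume :=
      integrableOn_Ioo_join hcb.le hba.le hKf1 hKf2
    refine ⟨hKf, ?_⟩
    have hI1 : ∫ t in Set.Ioo c b, K t * f t
        = -(xb * ∫ t in Set.Ioo c b, (c - t) / (1 - t) * f t) := by
      rw [← setIntegral_congr_fun measurableSet_Ioo e1, integral_neg, integral_const_mul]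
    have hI2 : ∫ t in Set.Ioo b a, K t * f t
        = xc * (∫ t in Set.Ioo b a, (b - t) / (1 - t) * f t)
          - xb * ∫ t in Set.Ioo b a, (c - t) / (1 - t) * f t := by
      rw [← setIntegral_congr_fun measurableSet_Ioo e2,
        integral_sub (h3.const_mul xc) (h2.const_mul xb), integral_const_mul, integral_const_mul]
    have hsplitc : (∫ t in a..c, (c - t) / (1 - t) * f t)
        = -((∫ t in Set.Ioo c b, (c - t) / (1 - t) * f t)
            + ∫ t in Set.Ioo b a, (c - t) / (1 - t) * f t) := by
      rw [intervalIntegral.integral_symm c a, ← intervalIntegral_eq_Ioo _ hcb.le,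
        ← intervalIntegral_eq_Ioo _ hba.le,
        intervalIntegral.integral_add_adjacent_intervals
          (intervalIntegrable_of_Ioo hcb.le h1) (intervalIntegrable_of_Ioo hba.le h2)]
    have hsplitb : (∫ t in a..b, (b - t) / (1 - t) * f t)
        = -∫ t in Set.Ioo b a, (b - t) / (1 - t) * f t := by
      rw [intervalIntegral.integral_symm b a, intervalIntegral_eq_Ioo _ hba.le]
    rw [integral_Ioo_split _ hcb.le hba.le hKf, hI1, hI2, hsplitc, hsplitb]
    ring
  have hM1 : ∀ t ∈ Set.Ioo (0:ℝ) 1, |(fun _ : ℝ => (1:ℝ)) t| ≤ 1 := by intro t _; simp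
  have h1g := W_intOn hM hgc hc0 hb1.le (phi_bd2 (s := c) hc0 hb1)
  have h2g := W_intOn hM hgc hb0 ha1.le (phi_bd2 (s := c) hb0 ha1)
  have h3g := W_intOn hM hgc hb0 ha1.le (phi_bd2 (s := b) hb0 ha1)
  have h11 := W_intOn hM1 continuousOn_const hc0 hb1.le (phi_bd2 (s := c) hc0 hb1)
  have h21 := W_intOn hM1 continuousOn_const hb0 ha1.le (phi_bd2 (s := c) hb0 ha1)
  have h31 := W_intOn hM1 continuousOn_const hb0 ha1.le (phi_bd2 (s := b) hb0 ha1)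
  obtain ⟨hKgint, hEg⟩ := rw3 g h1g h2g h3g
  obtain ⟨hK1int, hE1⟩ := rw3 (fun _ => 1) h11 h21 h31
  simp only [mul_one] at hE1 hK1int
  have hK0 : ∫ t in Set.Ioo c a, K t = 0 := by
    rw [← hE1, ← hxb, ← hxc]; ring
  have hKpos2 : ∀ t ∈ Set.Ioo c b, 0 < K t := by
    intro t ht
    simp only [hK]
    rw [min_eq_right (by linarith [ht.2] : (0:ℝ) ≤ b - t)]
    have h1t : 0 < 1 - t := by linarith [lt_trans ht.2 hb1]
    apply div_pos _ h1t
    nlinarith [mul_pos hxbpos (by linarith [ht.1] : (0:ℝ) < t - c)]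
  by_cases hha : xc * (b - a) - xb * (c - a) < 0
  · -- main subcase: crossing point m in (b, a)
    have hd : 0 < xc - xb := by nlinarith [mul_pos hxbpos (sub_pos.mpr hcb)]
    set m : ℝ := (xc * b - xb * c) / (xc - xb) with hm
    have hm' : m * (xc - xb) = xc * b - xb * c := div_mul_cancel₀ _ (ne_of_gt hd)
    have hid : ∀ t : ℝ, xc * (b - t) - xb * (c - t) = (m - t) * (xc - xb) := by
      intro t; linear_combination -hm'
    have hbm : b < m := by nlinarith [hid b, mul_pos hxbpos (sub_pos.mpr hcb)]
    have hma : m < a := by nlinarith [hid a]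
    have hKpos : ∀ t ∈ Set.Ioo c m, 0 < K t := by
      intro t ht
      rcases le_or_gt t b with h | h
      · simp only [hK]
        rw [min_eq_right (by linarith : (0:ℝ) ≤ b - t)]
        have h1t : 0 < 1 - t := by linarith [lt_of_le_of_lt h (lt_trans hba ha1)]
        apply div_pos _ h1t
        nlinarith [mul_pos hxbpos (by linarith [ht.1] : (0:ℝ) < t - c)]
      · simp only [hK]
        rw [min_eq_left (by linarith : b - t ≤ (0:ℝ)), hid t]
        have h1t : 0 < 1 - t := by linarith [lt_trans (lt_trans ht.2 hma) ha1]
        exact div_pos (mul_pos (by linarith [ht.2]) hd) h1t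
    have hKneg : ∀ t ∈ Set.Ioo m a, K t < 0 := by
      intro t ht
      simp only [hK]
      rw [min_eq_left (by linarith [lt_trans hbm ht.1] : b - t ≤ (0:ℝ)), hid t]
      have h1t : 0 < 1 - t := by linarith [lt_trans ht.2 ha1]
      exact div_neg_of_neg_of_pos (mul_neg_of_neg_of_pos (by linarith [ht.1]) hd) h1t
    have hcore := core (g := g) hc0 ha1.le (lt_trans hcb hbm) hma
      hK1int hKgint hK0 hKpos hKneg hgm
    constructor
    · rw [hEg]; exact hcore.1
    · intro h0; rw [hEg] at h0; exact ⟨g m, hcore.2 h0⟩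
  · -- degenerate subcase
    exfalso
    push_neg at hha
    have hKn2 : ∀ t ∈ Set.Ioo b a, 0 ≤ K t := by
      intro t ht
      simp only [hK]
      rw [min_eq_left (by linarith [ht.1] : b - t ≤ (0:ℝ))]
      have h1t : 0 < 1 - t := by linarith [lt_trans ht.2 ha1]
      refine div_nonneg ?_ h1t.le
      have hidt : (xc * (b - t) - xb * (c - t)) * (a - b)
          = (a - t) * (xc * (b - b) - xb * (c - b)) + (t - b) * (xc * (b - a) - xb * (c - a)) := by
        ring
      nlinarith [ht.1, ht.2, mul_pos hxbpos (sub_pos.mpr hcb),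
        mul_nonneg (by linarith [ht.1] : (0:ℝ) ≤ t - b) hha]
    have hIba : 0 ≤ ∫ t in Set.Ioo b a, K t :=
      setIntegral_nonneg measurableSet_Ioo hKn2
    have hKcb : IntegrableOn K (Set.Ioo c b) volume :=
      hK1int.mono_set (Set.Ioo_subset_Ioo le_rfl hba.le)
    have hIcb : 0 < ∫ t in Set.Ioo c b, K t := by
      have hpos : 0 < ∫ t in c..b, K t :=
        intervalIntegral.intervalIntegral_pos_of_pos_on
          (intervalIntegrable_of_Ioo hcb.le hKcb) hKpos2 hcb
      rwa [intervalIntegral_eq_Ioo _ hcb.le] at hpos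
    have := integral_Ioo_split K hcb.le hba.le hK1int
    linarith [hK0]
end cases

theorem stmt12 (g : ℝ → ℝ)
    (hgpos : ∀ t ∈ Set.Ioo (0:ℝ) 1, 0 < g t)
    (hgb : ∃ M, ∀ t ∈ Set.Ioo (0:ℝ) 1, g t ≤ M)
    (hgc : ContinuousOn g (Set.Ioo 0 1))
    (hgm : AntitoneOn g (Set.Ioo 0 1))
    (a b c : ℝ) (ha : 0 ≤ a) (ha1 : a < 1) (hc : 0 ≤ c) (hcb : c < b) (hb : b ≤ 1)
    (hab : a ≠ b) (hac : a ≠ c) :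
    (∃! q : ℝ, 0 < q ∧ Fg g q a b c = 0) ∧
    Fg (fun _ => 1) (rho a b c) a b c = 0 ∧
    (∀ q : ℝ, 0 < q → Fg g q a b c = 0 →
      q ≤ rho a b c ∧
      (q = rho a b c ↔ ∃ k : ℝ, ∀ t ∈ Set.Ioo (min a c) (max a b), g t = k)) := by
  obtain ⟨M, hMbd⟩ := hgb
  have hM : ∀ t ∈ Set.Ioo (0:ℝ) 1, |g t| ≤ M := fun t ht => by
    rw [abs_of_pos (hgpos t ht)]; exact hMbd t ht
  have hb0 : 0 ≤ b := le_trans hc hcb.le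
  have hc1 : c < 1 := lt_of_lt_of_le hcb hb
  have hM1 : ∀ t ∈ Set.Ioo (0:ℝ) 1, |(fun _ : ℝ => (1:ℝ)) t| ≤ 1 := fun t _ => by simp
  have h1pos : ∀ t ∈ Set.Ioo (0:ℝ) 1, 0 < (fun _ : ℝ => (1:ℝ)) t := fun t _ => one_pos
  obtain ⟨hIIb, hJb⟩ := J_pos_int hgpos hM hgc ha ha1 hb0 hb hab
  obtain ⟨hIIc, hJc⟩ := J_pos_int hgpos hM hgc ha ha1 hc hc1.le hac
  obtain ⟨hIIb1, hxbpos⟩ := J_pos_int h1pos hM1 continuousOn_const ha ha1 hb0 hb hab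
  obtain ⟨hIIc1, hxcpos⟩ := J_pos_int h1pos hM1 continuousOn_const ha ha1 hc hc1.le hac
  simp only [mul_one] at hxbpos hxcpos
  set Jb := ∫ t in a..b, (b - t) / (1 - t) * g t with hJbdef
  set Jc := ∫ t in a..c, (c - t) / (1 - t) * g t with hJcdef
  set xb := ∫ t in a..b, (b - t) / (1 - t) with hxbdef
  set xc := ∫ t in a..c, (c - t) / (1 - t) with hxcdef
  have hFgen : ∀ (f : ℝ → ℝ) (r : ℝ), Fg f r a b c
      = r * (∫ t in a..c, (c - t) / (1 - t) * f t)
        - (∫ t in a..b, (b - t) / (1 - t) * f t) := by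
    intro f r
    simp only [Fg]
    rw [intervalIntegral.integral_symm a b, intervalIntegral.integral_symm a c]
    ring
  have hrho : rho a b c = xb / xc := by
    rw [rho, if_pos ha1, hxbdef, hxcdef, xi_integral ha1 hb, xi_integral ha1 hc1.le]
  -- part 1
  have part1 : ∃! q : ℝ, 0 < q ∧ Fg g q a b c = 0 := by
    refine ⟨Jb / Jc, ⟨div_pos hJb hJc, ?_⟩, ?_⟩
    · rw [hFgen g (Jb / Jc), ← hJbdef, ← hJcdef]
      field_simp
      ring
    · rintro r ⟨hr0, hr⟩
      rw [hFgen g r, ← hJbdef, ← hJcdef] at hr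
      rw [eq_div_iff (ne_of_gt hJc)]
      linarith
  -- part 2
  have part2 : Fg (fun _ => 1) (rho a b c) a b c = 0 := by
    rw [hFgen (fun _ => 1) (rho a b c)]
    simp only [mul_one]
    rw [← hxbdef, ← hxcdef, hrho]
    field_simp
    ring
  -- main inequality
  have hmain : 0 ≤ xb * Jc - xc * Jb ∧
      (xb * Jc - xc * Jb = 0 → ∃ k, ∀ t ∈ Set.Ioo (min a c) (max a b), g t = k) := by
    rcases lt_trichotomy a c with h1 | h1 | h1
    · have hminac : min a c = a := min_eq_left h1.le
      have hmaxab : max a b = b := max_eq_right (h1.trans hcb).le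
      rw [hminac, hmaxab]
      exact case1_main hgpos hM hgc hgm ha h1 hcb hb hxbdef hxcdef hxbpos hxcpos
    · exact absurd h1 hac
    · have hminac : min a c = c := min_eq_right h1.le
      rcases lt_trichotomy a b with h2 | h2 | h2
      · have hmaxab : max a b = b := max_eq_right h2.le
        rw [hminac, hmaxab]
        exact case2_main hM hgc hgm hc h1 h2 ha1 hb hxbdef hxcdef hxbpos hxcpos
      · exact absurd h2 hab
      · have hmaxab : max a b = a := max_eq_left h2.le
        rw [hminac, hmaxab]
        exact case3_main hM hgc hgm hc hcb h2 ha1 hxbdef hxcdef hxbpos hxcpos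
  refine ⟨part1, part2, ?_⟩
  intro q hq0 hFq
  have hqeq : q = Jb / Jc := by
    rw [hFgen g q, ← hJbdef, ← hJcdef] at hFq
    rw [eq_div_iff (ne_of_gt hJc)]
    linarith
  constructor
  · rw [hqeq, hrho, div_le_div_iff₀ hJc hxcpos]
    linarith [hmain.1]
  · constructor
    · intro hqr
      rw [hqeq, hrho] at hqr
      have hE0 : xb * Jc - xc * Jb = 0 := by
        have := (div_eq_div_iff (ne_of_gt hJc) (ne_of_gt hxcpos)).mp hqr
        linarith
      exact hmain.2 hE0
    · rintro ⟨k, hk⟩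
      have hminmax : min a c < max a b :=
        lt_of_le_of_lt (min_le_right a c) (lt_of_lt_of_le hcb (le_max_right a b))
      have ht0 : (min a c + max a b) / 2 ∈ Set.Ioo (min a c) (max a b) :=
        ⟨by linarith, by linarith⟩
      have ht001 : (min a c + max a b) / 2 ∈ Set.Ioo (0:ℝ) 1 := by
        constructor
        · have : (0:ℝ) ≤ min a c := le_min ha hc
          linarith [ht0.1]
        · have : max a b ≤ 1 := max_le ha1.le hb
          linarith [ht0.2]
      have hkpos : 0 < k := by
        rw [← hk _ ht0]
        exact hgpos _ ht001
      have hae : ∀ᵐ t : ℝ, t ≠ max a b := by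
        refine MeasureTheory.ae_iff.mpr ?_
        simp
      have haec : ∀ᵐ t : ℝ, t ≠ max a c := by
        refine MeasureTheory.ae_iff.mpr ?_
        simp
      have hJbk : Jb = k * xb := by
        rw [hJbdef, hxbdef]
        rw [intervalIntegral.integral_congr_ae (g := fun t => (b - t) / (1 - t) * k) ?_]
        · rw [intervalIntegral.integral_mul_const]; ring
        · filter_upwards [hae] with t htne htm
          have htIoo : t ∈ Set.Ioo (min a c) (max a b) :=
            ⟨lt_of_le_of_lt (min_le_min le_rfl hcb.le) htm.1,
             lt_of_le_of_ne htm.2 htne⟩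
          rw [hk t htIoo]
      have hJck : Jc = k * xc := by
        rw [hJcdef, hxcdef]
        rw [intervalIntegral.integral_congr_ae (g := fun t => (c - t) / (1 - t) * k) ?_]
        · rw [intervalIntegral.integral_mul_const]; ring
        · filter_upwards [haec] with t htne htm
          have htIoo : t ∈ Set.Ioo (min a c) (max a b) :=
            ⟨htm.1, lt_of_lt_of_le (lt_of_le_of_ne htm.2 htne)
              (max_le_max le_rfl hcb.le)⟩
          rw [hk t htIoo]
      rw [hqeq, hJbk, hJck, hrho, mul_div_mul_left _ _ (ne_of_gt hkpos)]
end

section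
/- Let α, β be probability distributions on a finite set (points of the standard simplex P_n), and for t ∈ [0,1] let z(t) = t·α + (1-t)·β. Fix 0 ≤ a ≤ 1 and 0 ≤ c < b ≤ 1, and set u = z(a), v = z(b), w = z(c). If D(v‖u) = r·D(w‖u) with both relative entropies finite and positive, then 1/ρ(1-a,1-c,1-b) < r < ρ(a,b,c). -/
open Real Set

noncomputable def Zf (al be t : ℝ) : ℝ := t * al + (1 - t) * be
noncomputable def XiA (a t : ℝ) : ℝ :=
  t + (1 - t) * Real.log (1 - t) - a - (1 - t) * Real.log (1 - a)
noncomputable def PhiA (al be a t : ℝ) : ℝ :=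
  Zf al be t * Real.log (Zf al be t) - Zf al be t * Real.log (Zf al be a)
    - Zf al be t + Zf al be a

lemma hasDerivAt_Zf (al be t : ℝ) : HasDerivAt (Zf al be) (al - be) t := by
  have h : HasDerivAt (fun t : ℝ => t * al + (1 - t) * be) (1 * al + (0 - 1) * be) t :=
    ((hasDerivAt_id t).mul_const al).add (((hasDerivAt_const t (1:ℝ)).sub (hasDerivAt_id t)).mul_const be)
  exact h.congr_deriv (by ring)

lemma continuous_Zf (al be : ℝ) : Continuous (Zf al be) := by
  unfold Zf; continuity

lemma continuous_XiA (a : ℝ) : Continuous (XiA a) := by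
  have h : Continuous (fun t : ℝ => t + (1 - t) * Real.log (1 - t) - a - (1 - t) * Real.log (1 - a)) := by
    have := Real.continuous_mul_log.comp (continuous_const.sub continuous_id : Continuous (fun t : ℝ => 1 - t))
    continuity
  exact h

lemma continuous_PhiA (al be a : ℝ) : Continuous (PhiA al be a) := by
  have h1 := Real.continuous_mul_log.comp (continuous_Zf al be)
  have h2 := continuous_Zf al be
  unfold PhiA
  continuity

lemma hasDerivAt_XiA {a t : ℝ} (ht : t < 1) :
    HasDerivAt (XiA a) (Real.log (1 - a) - Real.log (1 - t)) t := by
  have h1t : (1:ℝ) - t ≠ 0 := by linarith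
  have hsub : HasDerivAt (fun t : ℝ => 1 - t) (0 - 1) t :=
    (hasDerivAt_const t (1:ℝ)).sub (hasDerivAt_id t)
  have hml : HasDerivAt (fun t : ℝ => (1 - t) * Real.log (1 - t))
      ((Real.log (1 - t) + 1) * (0 - 1)) t :=
    (Real.hasDerivAt_mul_log h1t).comp t hsub
  have h : HasDerivAt (fun t : ℝ => t + (1 - t) * Real.log (1 - t) - a - (1 - t) * Real.log (1 - a))
      (1 + (Real.log (1 - t) + 1) * (0 - 1) - 0 - (0 - 1) * Real.log (1 - a)) t :=
    (((hasDerivAt_id t).add hml).sub (hasDerivAt_const t a)).sub (hsub.mul_const _)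
  exact h.congr_deriv (by ring)

lemma hasDerivAt_PhiA {al be a t : ℝ} (hz : 0 < Zf al be t) :
    HasDerivAt (PhiA al be a)
      ((al - be) * (Real.log (Zf al be t) - Real.log (Zf al be a))) t := by
  have hml : HasDerivAt (fun t => Zf al be t * Real.log (Zf al be t))
      ((Real.log (Zf al be t) + 1) * (al - be)) t :=
    (Real.hasDerivAt_mul_log hz.ne').comp t (hasDerivAt_Zf al be t)
  have h : HasDerivAt (PhiA al be a)
      ((Real.log (Zf al be t) + 1) * (al - be) - (al - be) * Real.log (Zf al be a)
        - (al - be) + 0) t :=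
    ((hml.sub ((hasDerivAt_Zf al be t).mul_const _)).sub (hasDerivAt_Zf al be t)).add
      (hasDerivAt_const t _)
  exact h.congr_deriv (by ring)

noncomputable def MA (al be a t : ℝ) : ℝ :=
  (al - be) * (Real.log (Zf al be t) - Real.log (Zf al be a))
    - (1 - t) * (al - be) ^ 2 / Zf al be t * (Real.log (1 - a) - Real.log (1 - t))

noncomputable def KA (al be a t : ℝ) : ℝ :=
  PhiA al be a t - (1 - t) * (al - be) ^ 2 / Zf al be t * XiA a t

noncomputable def NA (al be a t : ℝ) : ℝ :=
  (al - be) * (Real.log (Zf al be t) - Real.log (Zf al be a)) * XiA a t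
    - PhiA al be a t * (Real.log (1 - a) - Real.log (1 - t))

noncomputable def M2A (al be a t : ℝ) : ℝ :=
  (al - be) * (Real.log (Zf al be t) - Real.log (Zf al be a))
    - (1 - a) * (al - be) ^ 2 / Zf al be a * (Real.log (1 - a) - Real.log (1 - t))

lemma hasDerivAt_logZf {al be t : ℝ} (hz : 0 < Zf al be t) :
    HasDerivAt (fun t => Real.log (Zf al be t)) ((Zf al be t)⁻¹ * (al - be)) t :=
  (Real.hasDerivAt_log hz.ne').comp t (hasDerivAt_Zf al be t)

lemma hasDerivAt_log1t {t : ℝ} (ht : t < 1) :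
    HasDerivAt (fun t : ℝ => Real.log (1 - t)) ((1 - t)⁻¹ * (0 - 1)) t :=
  (Real.hasDerivAt_log (by linarith : (1:ℝ) - t ≠ 0)).comp t
    ((hasDerivAt_const t (1:ℝ)).sub (hasDerivAt_id t))

lemma hasDerivAt_MA {al be a t : ℝ} (hz : 0 < Zf al be t) (ht : t < 1) :
    HasDerivAt (MA al be a)
      (al * (al - be) ^ 2 / (Zf al be t) ^ 2 * (Real.log (1 - a) - Real.log (1 - t))) t := by
  have h1t : (0:ℝ) < 1 - t := by linarith
  have hfirst : HasDerivAt (fun t => (al - be) * (Real.log (Zf al be t) - Real.log (Zf al be a)))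
      ((al - be) * ((Zf al be t)⁻¹ * (al - be) - 0)) t :=
    ((hasDerivAt_logZf hz).sub (hasDerivAt_const t _)).const_mul _
  have hnum : HasDerivAt (fun t : ℝ => (1 - t) * (al - be) ^ 2) ((0 - 1) * (al - be) ^ 2) t :=
    (((hasDerivAt_const t (1:ℝ)).sub (hasDerivAt_id t)).mul_const _)
  have hh : HasDerivAt (fun t => (1 - t) * (al - be) ^ 2 / Zf al be t)
      (((0 - 1) * (al - be) ^ 2 * Zf al be t - (1 - t) * (al - be) ^ 2 * (al - be)) / (Zf al be t) ^ 2) t :=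
    hnum.div (hasDerivAt_Zf al be t) hz.ne'
  have hxi' : HasDerivAt (fun t : ℝ => Real.log (1 - a) - Real.log (1 - t))
      (0 - (1 - t)⁻¹ * (0 - 1)) t :=
    (hasDerivAt_const t _).sub (hasDerivAt_log1t ht)
  have h := hfirst.sub (hh.mul hxi')
  refine h.congr_deriv ?_
  have hzz : Zf al be t ≠ 0 := hz.ne'
  have hal : Zf al be t + (1 - t) * (al - be) = al := by unfold Zf; ring
  have key : ∀ z d L : ℝ, z ≠ 0 →
      d * (z⁻¹ * d - 0) - (((0 - 1) * d ^ 2 * z - (1 - t) * d ^ 2 * d) / z ^ 2 * L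
        + (1 - t) * d ^ 2 / z * (0 - (1 - t)⁻¹ * (0 - 1))) = (z + (1 - t) * d) * d ^ 2 / z ^ 2 * L := by
    intro z d L hz0
    have h1t' : (1:ℝ) - t ≠ 0 := by linarith
    field_simp
    ring
  rw [key (Zf al be t) (al - be) (Real.log (1 - a) - Real.log (1 - t)) hzz, hal]

lemma hasDerivAt_KA {al be a t : ℝ} (hz : 0 < Zf al be t) (ht : t < 1) :
    HasDerivAt (KA al be a)
      (MA al be a t + al * (al - be) ^ 2 / (Zf al be t) ^ 2 * XiA a t) t := by
  have h1t : (0:ℝ) < 1 - t := by linarith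
  have hnum : HasDerivAt (fun t : ℝ => (1 - t) * (al - be) ^ 2) ((0 - 1) * (al - be) ^ 2) t :=
    (((hasDerivAt_const t (1:ℝ)).sub (hasDerivAt_id t)).mul_const _)
  have hh : HasDerivAt (fun t => (1 - t) * (al - be) ^ 2 / Zf al be t)
      (((0 - 1) * (al - be) ^ 2 * Zf al be t - (1 - t) * (al - be) ^ 2 * (al - be)) / (Zf al be t) ^ 2) t :=
    hnum.div (hasDerivAt_Zf al be t) hz.ne'
  have h := (hasDerivAt_PhiA (a := a) hz).sub (hh.mul (hasDerivAt_XiA (a := a) ht))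
  refine h.congr_deriv ?_
  have hzz : Zf al be t ≠ 0 := hz.ne'
  have hal : Zf al be t + (1 - t) * (al - be) = al := by unfold Zf; ring
  unfold MA
  have key : ∀ z d X L G : ℝ, z ≠ 0 →
      d * G - (((0 - 1) * d ^ 2 * z - (1 - t) * d ^ 2 * d) / z ^ 2 * X + (1 - t) * d ^ 2 / z * L)
        = (d * G - (1 - t) * d ^ 2 / z * L) + (z + (1 - t) * d) * d ^ 2 / z ^ 2 * X := by
    intro z d X L G hz0
    field_simp
    ring
  rw [key (Zf al be t) (al - be) (XiA a t) (Real.log (1 - a) - Real.log (1 - t))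
    (Real.log (Zf al be t) - Real.log (Zf al be a)) hzz, hal]

lemma hasDerivAt_NA {al be a t : ℝ} (hz : 0 < Zf al be t) (ht : t < 1) :
    HasDerivAt (NA al be a)
      ((al - be) ^ 2 / Zf al be t * XiA a t - PhiA al be a t / (1 - t)) t := by
  have h1t : (0:ℝ) < 1 - t := by linarith
  have hfirst : HasDerivAt (fun t => (al - be) * (Real.log (Zf al be t) - Real.log (Zf al be a)))
      ((al - be) * ((Zf al be t)⁻¹ * (al - be) - 0)) t :=
    ((hasDerivAt_logZf hz).sub (hasDerivAt_const t _)).const_mul _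
  have hL : HasDerivAt (fun t : ℝ => Real.log (1 - a) - Real.log (1 - t))
      (0 - (1 - t)⁻¹ * (0 - 1)) t :=
    (hasDerivAt_const t _).sub (hasDerivAt_log1t ht)
  have h := (hfirst.mul (hasDerivAt_XiA (a := a) ht)).sub ((hasDerivAt_PhiA (a := a) hz).mul hL)
  refine h.congr_deriv ?_
  have hzz : Zf al be t ≠ 0 := hz.ne'
  field_simp
  ring

lemma hasDerivAt_M2A {al be a t : ℝ} (hz : 0 < Zf al be t) (hu : 0 < Zf al be a) (ht : t < 1) :
    HasDerivAt (M2A al be a)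
      ((al - be) ^ 2 * (al * (a - t)) / (Zf al be t * Zf al be a * (1 - t))) t := by
  have h1t : (0:ℝ) < 1 - t := by linarith
  have hfirst : HasDerivAt (fun t => (al - be) * (Real.log (Zf al be t) - Real.log (Zf al be a)))
      ((al - be) * ((Zf al be t)⁻¹ * (al - be) - 0)) t :=
    ((hasDerivAt_logZf hz).sub (hasDerivAt_const t _)).const_mul _
  have hL : HasDerivAt (fun t : ℝ => Real.log (1 - a) - Real.log (1 - t))
      (0 - (1 - t)⁻¹ * (0 - 1)) t :=
    (hasDerivAt_const t _).sub (hasDerivAt_log1t ht)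
  have h := hfirst.sub (hL.const_mul ((1 - a) * (al - be) ^ 2 / Zf al be a))
  refine h.congr_deriv ?_
  have hid : (1 - t) * Zf al be a - (1 - a) * Zf al be t = al * (a - t) := by unfold Zf; ring
  have key : ∀ z U d : ℝ, z ≠ 0 → U ≠ 0 →
      d * (z⁻¹ * d - 0) - (1 - a) * d ^ 2 / U * (0 - (1 - t)⁻¹ * (0 - 1))
        = d ^ 2 * ((1 - t) * U - (1 - a) * z) / (z * U * (1 - t)) := by
    intro z U d hz0 hU0
    field_simp
    ring
  rw [key (Zf al be t) (Zf al be a) (al - be) hz.ne' hu.ne', hid]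

lemma Zf_pos {al be t : ℝ} (hal : 0 ≤ al) (hbe : 0 ≤ be) (hnb : ¬(al = 0 ∧ be = 0))
    (ht0 : 0 < t) (ht1 : t < 1) : 0 < Zf al be t := by
  unfold Zf
  rcases hal.lt_or_eq with h | h
  · nlinarith
  · rcases hbe.lt_or_eq with h' | h'
    · nlinarith
    · exact absurd ⟨h.symm, h'.symm⟩ hnb

lemma XiA_self (a : ℝ) : XiA a a = 0 := by unfold XiA; ring

lemma PhiA_self (al be a : ℝ) : PhiA al be a a = 0 := by unfold PhiA; ring

lemma MA_self (al be a : ℝ) : MA al be a a = 0 := by unfold MA; ring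

lemma KA_self (al be a : ℝ) : KA al be a a = 0 := by
  unfold KA; rw [XiA_self, PhiA_self]; ring

lemma NA_self (al be a : ℝ) : NA al be a a = 0 := by
  unfold NA; rw [XiA_self, PhiA_self]; ring

lemma M2A_self (al be a : ℝ) : M2A al be a a = 0 := by unfold M2A; ring

lemma XiA_strictMonoOn {a : ℝ} (ha : 0 ≤ a) (ha1 : a < 1) :
    StrictMonoOn (XiA a) (Icc a 1) := by
  apply strictMonoOn_of_deriv_pos (convex_Icc a 1) (continuous_XiA a).continuousOn
  rw [interior_Icc]
  intro t ht
  obtain ⟨ht1, ht2⟩ := ht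
  rw [(hasDerivAt_XiA (a := a) ht2).deriv, sub_pos]
  exact Real.log_lt_log (by linarith) (by linarith)

lemma XiA_strictAntiOn {a : ℝ} (ha1 : a < 1) :
    StrictAntiOn (XiA a) (Icc 0 a) := by
  apply strictAntiOn_of_deriv_neg (convex_Icc 0 a) (continuous_XiA a).continuousOn
  rw [interior_Icc]
  intro t ht
  obtain ⟨ht1, ht2⟩ := ht
  rw [(hasDerivAt_XiA (a := a) (lt_trans ht2 ha1)).deriv, sub_neg]
  exact Real.log_lt_log (by linarith) (by linarith)

lemma XiA_pos_of_gt {a t : ℝ} (ha : 0 ≤ a) (ha1 : a < 1) (hat : a < t) (ht : t ≤ 1) :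
    0 < XiA a t := by
  have := XiA_strictMonoOn ha ha1 ⟨le_refl a, le_of_lt ha1⟩
    ⟨le_of_lt hat, ht⟩ hat
  rwa [XiA_self] at this

lemma XiA_pos_of_lt {a t : ℝ} (ht0 : 0 ≤ t) (hat : t < a) (ha1 : a < 1) :
    0 < XiA a t := by
  have := XiA_strictAntiOn ha1 ⟨ht0, le_of_lt hat⟩
    ⟨le_trans ht0 (le_of_lt hat), le_refl a⟩ hat
  rwa [XiA_self] at this

lemma XiA_nonneg {a t : ℝ} (ha : 0 ≤ a) (ha1 : a < 1) (ht0 : 0 ≤ t) (ht : t ≤ 1) :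
    0 ≤ XiA a t := by
  rcases lt_trichotomy t a with h | h | h
  · exact (XiA_pos_of_lt ht0 h ha1).le
  · rw [h, XiA_self]
  · exact (XiA_pos_of_gt ha ha1 h ht).le

section Chain

variable {al be a : ℝ}

lemma not_both (hu : 0 < Zf al be a) : ¬(al = 0 ∧ be = 0) := by
  rintro ⟨h1, h2⟩
  simp [Zf, h1, h2] at hu

lemma zpos_right (hal : 0 ≤ al) (hbe : 0 ≤ be) (ha : 0 ≤ a) (hu : 0 < Zf al be a) :
    ∀ t ∈ Ico a 1, 0 < Zf al be t := by
  intro t ht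
  rcases eq_or_lt_of_le ht.1 with h | h
  · rwa [← h]
  · exact Zf_pos hal hbe (not_both hu) (lt_of_le_of_lt ha h) ht.2

lemma zpos_left (hal : 0 ≤ al) (hbe : 0 ≤ be) (ha1 : a < 1) (hu : 0 < Zf al be a) :
    ∀ t ∈ Ioc 0 a, 0 < Zf al be t := by
  intro t ht
  exact Zf_pos hal hbe (not_both hu) ht.1 (lt_of_le_of_lt ht.2 ha1)

lemma MA_nonneg_right (hal : 0 ≤ al) (hbe : 0 ≤ be) (ha : 0 ≤ a) (ha1 : a < 1)
    (hu : 0 < Zf al be a) : ∀ t ∈ Ico a 1, 0 ≤ MA al be a t := by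
  have hmono : MonotoneOn (MA al be a) (Ico a 1) := by
    apply monotoneOn_of_deriv_nonneg (convex_Ico a 1)
    · intro t ht
      exact (hasDerivAt_MA (zpos_right hal hbe ha hu t ht) ht.2).continuousAt.continuousWithinAt
    · rw [interior_Ico]
      intro t ht
      exact (hasDerivAt_MA (zpos_right hal hbe ha hu t (Ioo_subset_Ico_self ht))
        ht.2).differentiableAt.differentiableWithinAt
    · rw [interior_Ico]
      intro t ht
      obtain ⟨ht1, ht2⟩ := ht
      rw [(hasDerivAt_MA (zpos_right hal hbe ha hu t ⟨le_of_lt ht1, ht2⟩) ht2).deriv]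
      apply mul_nonneg
      · positivity
      · rw [sub_nonneg]
        exact Real.log_le_log (by linarith) (by linarith)
  intro t ht
  have := hmono (left_mem_Ico.2 ha1) ht ht.1
  rwa [MA_self] at this

lemma KA_nonneg_right (hal : 0 ≤ al) (hbe : 0 ≤ be) (ha : 0 ≤ a) (ha1 : a < 1)
    (hu : 0 < Zf al be a) : ∀ t ∈ Ico a 1, 0 ≤ KA al be a t := by
  have hmono : MonotoneOn (KA al be a) (Ico a 1) := by
    apply monotoneOn_of_deriv_nonneg (convex_Ico a 1)
    · intro t ht
      exact (hasDerivAt_KA (zpos_right hal hbe ha hu t ht) ht.2).continuousAt.continuousWithinAt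
    · rw [interior_Ico]
      intro t ht
      exact (hasDerivAt_KA (zpos_right hal hbe ha hu t (Ioo_subset_Ico_self ht))
        ht.2).differentiableAt.differentiableWithinAt
    · rw [interior_Ico]
      intro t ht
      obtain ⟨ht1, ht2⟩ := ht
      rw [(hasDerivAt_KA (zpos_right hal hbe ha hu t ⟨le_of_lt ht1, ht2⟩) ht2).deriv]
      have h1 := MA_nonneg_right hal hbe ha ha1 hu t ⟨le_of_lt ht1, ht2⟩
      have h2 : 0 ≤ al * (al - be) ^ 2 / (Zf al be t) ^ 2 * XiA a t := by
        apply mul_nonneg (by positivity)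
        exact (XiA_pos_of_gt ha ha1 ht1 (le_of_lt ht2)).le
      linarith
  intro t ht
  have := hmono (left_mem_Ico.2 ha1) ht ht.1
  rwa [KA_self] at this

lemma KA_pos_right (hal : 0 ≤ al) (hbe : 0 ≤ be) (ha : 0 ≤ a) (ha1 : a < 1)
    (hu : 0 < Zf al be a) (hsa : 0 < al) (hne : al ≠ be) :
    ∀ t ∈ Ioo a 1, 0 < KA al be a t := by
  have hmono : StrictMonoOn (KA al be a) (Ico a 1) := by
    apply strictMonoOn_of_deriv_pos (convex_Ico a 1)
    · intro t ht
      exact (hasDerivAt_KA (zpos_right hal hbe ha hu t ht) ht.2).continuousAt.continuousWithinAt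
    · rw [interior_Ico]
      intro t ht
      obtain ⟨ht1, ht2⟩ := ht
      rw [(hasDerivAt_KA (zpos_right hal hbe ha hu t ⟨le_of_lt ht1, ht2⟩) ht2).deriv]
      have h1 := MA_nonneg_right hal hbe ha ha1 hu t ⟨le_of_lt ht1, ht2⟩
      have h2 : 0 < al * (al - be) ^ 2 / (Zf al be t) ^ 2 * XiA a t := by
        apply mul_pos
        · have hz := zpos_right hal hbe ha hu t ⟨le_of_lt ht1, ht2⟩
          have hd : (0:ℝ) < (al - be) ^ 2 := by
            have : al - be ≠ 0 := sub_ne_zero.2 hne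
            positivity
          positivity
        · exact XiA_pos_of_gt ha ha1 ht1 (le_of_lt ht2)
      linarith
  intro t ht
  have := hmono (left_mem_Ico.2 ha1) ⟨le_of_lt ht.1, ht.2⟩ ht.1
  rwa [KA_self] at this

lemma NA_nonpos_right (hal : 0 ≤ al) (hbe : 0 ≤ be) (ha : 0 ≤ a) (ha1 : a < 1)
    (hu : 0 < Zf al be a) : ∀ t ∈ Ico a 1, NA al be a t ≤ 0 := by
  have hmono : AntitoneOn (NA al be a) (Ico a 1) := by
    apply antitoneOn_of_deriv_nonpos (convex_Ico a 1)
    · intro t ht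
      exact (hasDerivAt_NA (zpos_right hal hbe ha hu t ht) ht.2).continuousAt.continuousWithinAt
    · rw [interior_Ico]
      intro t ht
      exact (hasDerivAt_NA (zpos_right hal hbe ha hu t (Ioo_subset_Ico_self ht))
        ht.2).differentiableAt.differentiableWithinAt
    · rw [interior_Ico]
      intro t ht
      obtain ⟨ht1, ht2⟩ := ht
      have hz := zpos_right hal hbe ha hu t ⟨le_of_lt ht1, ht2⟩
      rw [(hasDerivAt_NA hz ht2).deriv]
      have hK := KA_nonneg_right hal hbe ha ha1 hu t ⟨le_of_lt ht1, ht2⟩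
      unfold KA at hK
      have h1t : (0:ℝ) < 1 - t := by linarith
      rw [sub_nonpos, le_div_iff₀ h1t]
      have key : (al - be) ^ 2 / Zf al be t * XiA a t * (1 - t)
          = (1 - t) * (al - be) ^ 2 / Zf al be t * XiA a t := by
        field_simp
      rw [key]
      linarith
  intro t ht
  have := hmono (left_mem_Ico.2 ha1) ht ht.1
  rwa [NA_self] at this

lemma NA_neg_right (hal : 0 ≤ al) (hbe : 0 ≤ be) (ha : 0 ≤ a) (ha1 : a < 1)
    (hu : 0 < Zf al be a) (hsa : 0 < al) (hne : al ≠ be) :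
    ∀ t ∈ Ioo a 1, NA al be a t < 0 := by
  have hmono : StrictAntiOn (NA al be a) (Ico a 1) := by
    apply strictAntiOn_of_deriv_neg (convex_Ico a 1)
    · intro t ht
      exact (hasDerivAt_NA (zpos_right hal hbe ha hu t ht) ht.2).continuousAt.continuousWithinAt
    · rw [interior_Ico]
      intro t ht
      obtain ⟨ht1, ht2⟩ := ht
      have hz := zpos_right hal hbe ha hu t ⟨le_of_lt ht1, ht2⟩
      rw [(hasDerivAt_NA hz ht2).deriv]
      have hK := KA_pos_right hal hbe ha ha1 hu hsa hne t ⟨ht1, ht2⟩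
      unfold KA at hK
      have h1t : (0:ℝ) < 1 - t := by linarith
      rw [sub_neg, lt_div_iff₀ h1t]
      have key : (al - be) ^ 2 / Zf al be t * XiA a t * (1 - t)
          = (1 - t) * (al - be) ^ 2 / Zf al be t * XiA a t := by
        field_simp
      rw [key]
      linarith
  intro t ht
  have := hmono (left_mem_Ico.2 ha1) ⟨le_of_lt ht.1, ht.2⟩ ht.1
  rwa [NA_self] at this

lemma coord_right (hal : 0 ≤ al) (hbe : 0 ≤ be) (ha : 0 ≤ a) (ha1 : a < 1)
    (hu : 0 < Zf al be a) {b c : ℝ} (hac : a < c) (hcb : c < b) (hb : b ≤ 1) :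
    PhiA al be a b * XiA a c ≤ XiA a b * PhiA al be a c ∧
      (0 < al → al ≠ be → PhiA al be a b * XiA a c < XiA a b * PhiA al be a c) := by
  have hxic : 0 < XiA a c := XiA_pos_of_gt ha ha1 hac (by linarith)
  have hxib : 0 < XiA a b := XiA_pos_of_gt ha ha1 (lt_trans hac hcb) hb
  have hXipos : ∀ t ∈ Icc c b, XiA a t ≠ 0 := by
    intro t ht
    exact (XiA_pos_of_gt ha ha1 (lt_of_lt_of_le hac ht.1) (le_trans ht.2 hb)).ne'
  have hcont : ContinuousOn (fun t => PhiA al be a t / XiA a t) (Icc c b) :=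
    ((continuous_PhiA al be a).continuousOn).div ((continuous_XiA a).continuousOn) hXipos
  have hderiv : ∀ t ∈ Ioo c b, HasDerivAt (fun t => PhiA al be a t / XiA a t)
      (NA al be a t / (XiA a t) ^ 2) t := by
    intro t ht
    have htm : t ∈ Ioo a 1 := ⟨lt_trans hac ht.1, lt_of_lt_of_le ht.2 hb⟩
    have hz := zpos_right hal hbe ha hu t ⟨le_of_lt htm.1, htm.2⟩
    have hXine : XiA a t ≠ 0 := (XiA_pos_of_gt ha ha1 htm.1 (le_of_lt htm.2)).ne'
    have h := (hasDerivAt_PhiA (a := a) hz).div (hasDerivAt_XiA (a := a) htm.2) hXine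
    refine h.congr_deriv ?_
    unfold NA
    ring
  constructor
  · have hanti : AntitoneOn (fun t => PhiA al be a t / XiA a t) (Icc c b) := by
      apply antitoneOn_of_deriv_nonpos (convex_Icc c b) hcont
      · rw [interior_Icc]
        intro t ht
        exact (hderiv t ht).differentiableAt.differentiableWithinAt
      · rw [interior_Icc]
        intro t ht
        rw [(hderiv t ht).deriv]
        have htm : t ∈ Ico a 1 := ⟨le_of_lt (lt_trans hac ht.1), lt_of_lt_of_le ht.2 hb⟩
        exact div_nonpos_of_nonpos_of_nonneg (NA_nonpos_right hal hbe ha ha1 hu t htm) (sq_nonneg _)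
    have h := hanti (left_mem_Icc.2 (le_of_lt hcb)) (right_mem_Icc.2 (le_of_lt hcb)) (le_of_lt hcb)
    rw [div_le_div_iff₀ hxib hxic] at h
    linarith
  · intro hsa hne
    have hanti : StrictAntiOn (fun t => PhiA al be a t / XiA a t) (Icc c b) := by
      apply strictAntiOn_of_deriv_neg (convex_Icc c b) hcont
      rw [interior_Icc]
      intro t ht
      rw [(hderiv t ht).deriv]
      have htm : t ∈ Ioo a 1 := ⟨lt_trans hac ht.1, lt_of_lt_of_le ht.2 hb⟩
      apply div_neg_of_neg_of_pos (NA_neg_right hal hbe ha ha1 hu hsa hne t htm)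
      have := hXipos t (Ioo_subset_Icc_self ht)
      positivity
    have h := hanti (left_mem_Icc.2 (le_of_lt hcb)) (right_mem_Icc.2 (le_of_lt hcb)) hcb
    rw [div_lt_div_iff₀ hxib hxic] at h
    linarith

lemma MA_nonneg_left (hal : 0 ≤ al) (hbe : 0 ≤ be) (ha0 : 0 < a) (ha1 : a < 1)
    (hu : 0 < Zf al be a) : ∀ t ∈ Ioc 0 a, 0 ≤ MA al be a t := by
  have hanti : AntitoneOn (MA al be a) (Ioc 0 a) := by
    apply antitoneOn_of_deriv_nonpos (convex_Ioc 0 a)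
    · intro t ht
      exact (hasDerivAt_MA (zpos_left hal hbe ha1 hu t ht)
        (lt_of_le_of_lt ht.2 ha1)).continuousAt.continuousWithinAt
    · rw [interior_Ioc]
      intro t ht
      exact (hasDerivAt_MA (zpos_left hal hbe ha1 hu t (Ioo_subset_Ioc_self ht))
        (by linarith [ht.2] : t < 1)).differentiableAt.differentiableWithinAt
    · rw [interior_Ioc]
      intro t ht
      obtain ⟨ht1, ht2⟩ := ht
      have ht1' : t < 1 := by linarith
      rw [(hasDerivAt_MA (zpos_left hal hbe ha1 hu t ⟨ht1, le_of_lt ht2⟩) ht1').deriv]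
      apply mul_nonpos_of_nonneg_of_nonpos
      · positivity
      · rw [sub_nonpos]
        exact Real.log_le_log (by linarith) (by linarith)
  intro t ht
  have := hanti ht (right_mem_Ioc.2 ha0) ht.2
  rwa [MA_self] at this

lemma KA_nonpos_left (hal : 0 ≤ al) (hbe : 0 ≤ be) (ha0 : 0 < a) (ha1 : a < 1)
    (hu : 0 < Zf al be a) : ∀ t ∈ Ioc 0 a, KA al be a t ≤ 0 := by
  have hmono : MonotoneOn (KA al be a) (Ioc 0 a) := by
    apply monotoneOn_of_deriv_nonneg (convex_Ioc 0 a)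
    · intro t ht
      exact (hasDerivAt_KA (zpos_left hal hbe ha1 hu t ht)
        (lt_of_le_of_lt ht.2 ha1)).continuousAt.continuousWithinAt
    · rw [interior_Ioc]
      intro t ht
      exact (hasDerivAt_KA (zpos_left hal hbe ha1 hu t (Ioo_subset_Ioc_self ht))
        (by linarith [ht.2] : t < 1)).differentiableAt.differentiableWithinAt
    · rw [interior_Ioc]
      intro t ht
      obtain ⟨ht1, ht2⟩ := ht
      have ht1' : t < 1 := by linarith
      rw [(hasDerivAt_KA (zpos_left hal hbe ha1 hu t ⟨ht1, le_of_lt ht2⟩) ht1').deriv]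
      have h1 := MA_nonneg_left hal hbe ha0 ha1 hu t ⟨ht1, le_of_lt ht2⟩
      have h2 : 0 ≤ al * (al - be) ^ 2 / (Zf al be t) ^ 2 * XiA a t := by
        apply mul_nonneg (by positivity)
        exact (XiA_pos_of_lt (le_of_lt ht1) ht2 ha1).le
      linarith
  intro t ht
  have := hmono ht (right_mem_Ioc.2 ha0) ht.2
  rwa [KA_self] at this

lemma KA_neg_left (hal : 0 ≤ al) (hbe : 0 ≤ be) (ha0 : 0 < a) (ha1 : a < 1)
    (hu : 0 < Zf al be a) (hsa : 0 < al) (hne : al ≠ be) :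
    ∀ t ∈ Ioo 0 a, KA al be a t < 0 := by
  have hmono : StrictMonoOn (KA al be a) (Ioc 0 a) := by
    apply strictMonoOn_of_deriv_pos (convex_Ioc 0 a)
    · intro t ht
      exact (hasDerivAt_KA (zpos_left hal hbe ha1 hu t ht)
        (lt_of_le_of_lt ht.2 ha1)).continuousAt.continuousWithinAt
    · rw [interior_Ioc]
      intro t ht
      obtain ⟨ht1, ht2⟩ := ht
      have ht1' : t < 1 := by linarith
      rw [(hasDerivAt_KA (zpos_left hal hbe ha1 hu t ⟨ht1, le_of_lt ht2⟩) ht1').deriv]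
      have h1 := MA_nonneg_left hal hbe ha0 ha1 hu t ⟨ht1, le_of_lt ht2⟩
      have h2 : 0 < al * (al - be) ^ 2 / (Zf al be t) ^ 2 * XiA a t := by
        apply mul_pos
        · have hz := zpos_left hal hbe ha1 hu t ⟨ht1, le_of_lt ht2⟩
          have hd : (0:ℝ) < (al - be) ^ 2 := by
            have : al - be ≠ 0 := sub_ne_zero.2 hne
            positivity
          positivity
        · exact XiA_pos_of_lt (le_of_lt ht1) ht2 ha1
      linarith
  intro t ht
  have := hmono (Ioo_subset_Ioc_self ht) (right_mem_Ioc.2 ha0) ht.2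
  rwa [KA_self] at this

lemma NA_nonpos_left (hal : 0 ≤ al) (hbe : 0 ≤ be) (ha0 : 0 < a) (ha1 : a < 1)
    (hu : 0 < Zf al be a) : ∀ t ∈ Ioc 0 a, NA al be a t ≤ 0 := by
  have hmono : MonotoneOn (NA al be a) (Ioc 0 a) := by
    apply monotoneOn_of_deriv_nonneg (convex_Ioc 0 a)
    · intro t ht
      exact (hasDerivAt_NA (zpos_left hal hbe ha1 hu t ht)
        (lt_of_le_of_lt ht.2 ha1)).continuousAt.continuousWithinAt
    · rw [interior_Ioc]
      intro t ht
      exact (hasDerivAt_NA (zpos_left hal hbe ha1 hu t (Ioo_subset_Ioc_self ht))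
        (by linarith [ht.2] : t < 1)).differentiableAt.differentiableWithinAt
    · rw [interior_Ioc]
      intro t ht
      obtain ⟨ht1, ht2⟩ := ht
      have ht1' : t < 1 := by linarith
      have hz := zpos_left hal hbe ha1 hu t ⟨ht1, le_of_lt ht2⟩
      rw [(hasDerivAt_NA hz ht1').deriv]
      have hK := KA_nonpos_left hal hbe ha0 ha1 hu t ⟨ht1, le_of_lt ht2⟩
      unfold KA at hK
      have h1t : (0:ℝ) < 1 - t := by linarith
      rw [sub_nonneg, div_le_iff₀ h1t]
      have key : (al - be) ^ 2 / Zf al be t * XiA a t * (1 - t)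
          = (1 - t) * (al - be) ^ 2 / Zf al be t * XiA a t := by
        field_simp
      rw [key]
      linarith
  intro t ht
  have := hmono ht (right_mem_Ioc.2 ha0) ht.2
  rwa [NA_self] at this

lemma NA_neg_left (hal : 0 ≤ al) (hbe : 0 ≤ be) (ha0 : 0 < a) (ha1 : a < 1)
    (hu : 0 < Zf al be a) (hsa : 0 < al) (hne : al ≠ be) :
    ∀ t ∈ Ioo 0 a, NA al be a t < 0 := by
  have hmono : StrictMonoOn (NA al be a) (Ioc 0 a) := by
    apply strictMonoOn_of_deriv_pos (convex_Ioc 0 a)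
    · intro t ht
      exact (hasDerivAt_NA (zpos_left hal hbe ha1 hu t ht)
        (lt_of_le_of_lt ht.2 ha1)).continuousAt.continuousWithinAt
    · rw [interior_Ioc]
      intro t ht
      obtain ⟨ht1, ht2⟩ := ht
      have ht1' : t < 1 := by linarith
      have hz := zpos_left hal hbe ha1 hu t ⟨ht1, le_of_lt ht2⟩
      rw [(hasDerivAt_NA hz ht1').deriv]
      have hK := KA_neg_left hal hbe ha0 ha1 hu hsa hne t ⟨ht1, ht2⟩
      unfold KA at hK
      have h1t : (0:ℝ) < 1 - t := by linarith
      rw [sub_pos, div_lt_iff₀ h1t]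
      have key : (al - be) ^ 2 / Zf al be t * XiA a t * (1 - t)
          = (1 - t) * (al - be) ^ 2 / Zf al be t * XiA a t := by
        field_simp
      rw [key]
      linarith
  intro t ht
  have := hmono (Ioo_subset_Ioc_self ht) (right_mem_Ioc.2 ha0) ht.2
  rwa [NA_self] at this

lemma coord_left (hal : 0 ≤ al) (hbe : 0 ≤ be) (ha1 : a < 1)
    (hu : 0 < Zf al be a) {b c : ℝ} (hc0 : 0 ≤ c) (hcb : c < b) (hba : b < a) :
    PhiA al be a b * XiA a c ≤ XiA a b * PhiA al be a c ∧
      (0 < al → al ≠ be → PhiA al be a b * XiA a c < XiA a b * PhiA al be a c) := by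
  have ha0 : 0 < a := by linarith
  have hxic : 0 < XiA a c := XiA_pos_of_lt hc0 (by linarith) ha1
  have hxib : 0 < XiA a b := XiA_pos_of_lt (by linarith) hba ha1
  have hXipos : ∀ t ∈ Icc c b, XiA a t ≠ 0 := by
    intro t ht
    exact (XiA_pos_of_lt (le_trans hc0 ht.1) (lt_of_le_of_lt ht.2 hba) ha1).ne'
  have hcont : ContinuousOn (fun t => PhiA al be a t / XiA a t) (Icc c b) :=
    ((continuous_PhiA al be a).continuousOn).div ((continuous_XiA a).continuousOn) hXipos
  have hderiv : ∀ t ∈ Ioo c b, HasDerivAt (fun t => PhiA al be a t / XiA a t)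
      (NA al be a t / (XiA a t) ^ 2) t := by
    intro t ht
    have htm : t ∈ Ioo 0 a := ⟨lt_of_le_of_lt hc0 ht.1, lt_trans ht.2 hba⟩
    have hz := zpos_left hal hbe ha1 hu t (Ioo_subset_Ioc_self htm)
    have hXine : XiA a t ≠ 0 := (XiA_pos_of_lt (le_of_lt htm.1) htm.2 ha1).ne'
    have h := (hasDerivAt_PhiA (a := a) hz).div
      (hasDerivAt_XiA (a := a) (by linarith [htm.2] : t < 1)) hXine
    refine h.congr_deriv ?_
    unfold NA
    ring
  constructor
  · have hanti : AntitoneOn (fun t => PhiA al be a t / XiA a t) (Icc c b) := by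
      apply antitoneOn_of_deriv_nonpos (convex_Icc c b) hcont
      · rw [interior_Icc]
        intro t ht
        exact (hderiv t ht).differentiableAt.differentiableWithinAt
      · rw [interior_Icc]
        intro t ht
        rw [(hderiv t ht).deriv]
        have htm : t ∈ Ioc 0 a := ⟨lt_of_le_of_lt hc0 ht.1, le_of_lt (lt_trans ht.2 hba)⟩
        exact div_nonpos_of_nonpos_of_nonneg (NA_nonpos_left hal hbe ha0 ha1 hu t htm) (sq_nonneg _)
    have h := hanti (left_mem_Icc.2 (le_of_lt hcb)) (right_mem_Icc.2 (le_of_lt hcb)) (le_of_lt hcb)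
    rw [div_le_div_iff₀ hxib hxic] at h
    linarith
  · intro hsa hne
    have hanti : StrictAntiOn (fun t => PhiA al be a t / XiA a t) (Icc c b) := by
      apply strictAntiOn_of_deriv_neg (convex_Icc c b) hcont
      rw [interior_Icc]
      intro t ht
      rw [(hderiv t ht).deriv]
      have htm : t ∈ Ioo 0 a := ⟨lt_of_le_of_lt hc0 ht.1, lt_trans ht.2 hba⟩
      apply div_neg_of_neg_of_pos (NA_neg_left hal hbe ha0 ha1 hu hsa hne t htm)
      have := hXipos t (Ioo_subset_Icc_self ht)
      positivity
    have h := hanti (left_mem_Icc.2 (le_of_lt hcb)) (right_mem_Icc.2 (le_of_lt hcb)) hcb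
    rw [div_lt_div_iff₀ hxib hxic] at h
    linarith

lemma hasDerivAt_K2 (lam : ℝ) {t : ℝ} (hz : 0 < Zf al be t) (ht : t < 1)
    (hlam : lam = (1 - a) * (al - be) ^ 2 / Zf al be a) :
    HasDerivAt (fun t => PhiA al be a t - lam * XiA a t) (M2A al be a t) t := by
  have h := (hasDerivAt_PhiA (a := a) hz).sub ((hasDerivAt_XiA (a := a) ht).const_mul lam)
  refine h.congr_deriv ?_
  rw [hlam]
  unfold M2A
  ring

lemma M2_nonpos_right (hal : 0 ≤ al) (hbe : 0 ≤ be) (ha : 0 ≤ a) (ha1 : a < 1)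
    (hu : 0 < Zf al be a) : ∀ t ∈ Ico a 1, M2A al be a t ≤ 0 := by
  have hanti : AntitoneOn (M2A al be a) (Ico a 1) := by
    apply antitoneOn_of_deriv_nonpos (convex_Ico a 1)
    · intro t ht
      exact (hasDerivAt_M2A (zpos_right hal hbe ha hu t ht) hu
        ht.2).continuousAt.continuousWithinAt
    · rw [interior_Ico]
      intro t ht
      exact (hasDerivAt_M2A (zpos_right hal hbe ha hu t (Ioo_subset_Ico_self ht)) hu
        ht.2).differentiableAt.differentiableWithinAt
    · rw [interior_Ico]
      intro t ht
      obtain ⟨ht1, ht2⟩ := ht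
      have hz := zpos_right hal hbe ha hu t ⟨le_of_lt ht1, ht2⟩
      have h1t : (0:ℝ) < 1 - t := by linarith
      rw [(hasDerivAt_M2A hz hu ht2).deriv]
      apply div_nonpos_of_nonpos_of_nonneg
      · apply mul_nonpos_of_nonneg_of_nonpos (sq_nonneg _)
        apply mul_nonpos_of_nonneg_of_nonpos hal
        linarith
      · positivity
  intro t ht
  have := hanti (left_mem_Ico.2 ha1) ht ht.1
  rwa [M2A_self] at this

lemma M2_neg_right (hal : 0 ≤ al) (hbe : 0 ≤ be) (ha : 0 ≤ a) (ha1 : a < 1)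
    (hu : 0 < Zf al be a) (hsa : 0 < al) (hne : al ≠ be) :
    ∀ t ∈ Ioo a 1, M2A al be a t < 0 := by
  have hanti : StrictAntiOn (M2A al be a) (Ico a 1) := by
    apply strictAntiOn_of_deriv_neg (convex_Ico a 1)
    · intro t ht
      exact (hasDerivAt_M2A (zpos_right hal hbe ha hu t ht) hu
        ht.2).continuousAt.continuousWithinAt
    · rw [interior_Ico]
      intro t ht
      obtain ⟨ht1, ht2⟩ := ht
      have hz := zpos_right hal hbe ha hu t ⟨le_of_lt ht1, ht2⟩
      have h1t : (0:ℝ) < 1 - t := by linarith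
      rw [(hasDerivAt_M2A hz hu ht2).deriv]
      apply div_neg_of_neg_of_pos
      · apply mul_neg_of_pos_of_neg
        · have : al - be ≠ 0 := sub_ne_zero.2 hne
          positivity
        · apply mul_neg_of_pos_of_neg hsa
          linarith
      · positivity
  intro t ht
  have := hanti (left_mem_Ico.2 ha1) ⟨le_of_lt ht.1, ht.2⟩ ht.1
  rwa [M2A_self] at this

lemma M2_nonpos_left (hal : 0 ≤ al) (hbe : 0 ≤ be) (ha0 : 0 < a) (ha1 : a < 1)
    (hu : 0 < Zf al be a) : ∀ t ∈ Ioc 0 a, M2A al be a t ≤ 0 := by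
  have hmono : MonotoneOn (M2A al be a) (Ioc 0 a) := by
    apply monotoneOn_of_deriv_nonneg (convex_Ioc 0 a)
    · intro t ht
      exact (hasDerivAt_M2A (zpos_left hal hbe ha1 hu t ht) hu
        (lt_of_le_of_lt ht.2 ha1)).continuousAt.continuousWithinAt
    · rw [interior_Ioc]
      intro t ht
      exact (hasDerivAt_M2A (zpos_left hal hbe ha1 hu t (Ioo_subset_Ioc_self ht)) hu
        (by linarith [ht.2] : t < 1)).differentiableAt.differentiableWithinAt
    · rw [interior_Ioc]
      intro t ht
      obtain ⟨ht1, ht2⟩ := ht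
      have ht1' : t < 1 := by linarith
      have hz := zpos_left hal hbe ha1 hu t ⟨ht1, le_of_lt ht2⟩
      have h1t : (0:ℝ) < 1 - t := by linarith
      rw [(hasDerivAt_M2A hz hu ht1').deriv]
      apply div_nonneg
      · apply mul_nonneg (sq_nonneg _)
        apply mul_nonneg hal
        linarith
      · positivity
  intro t ht
  have := hmono ht (right_mem_Ioc.2 ha0) ht.2
  rwa [M2A_self] at this

lemma coord_cross (hal : 0 ≤ al) (hbe : 0 ≤ be) (ha1 : a < 1)
    (hu : 0 < Zf al be a) {b c : ℝ} (hc0 : 0 ≤ c) (hca : c < a) (hab : a < b) (hb : b ≤ 1) :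
    PhiA al be a b * XiA a c ≤ XiA a b * PhiA al be a c ∧
      (0 < al → al ≠ be → PhiA al be a b * XiA a c < XiA a b * PhiA al be a c) := by
  have ha : 0 ≤ a := le_trans hc0 (le_of_lt hca)
  have ha0 : 0 < a := lt_of_le_of_lt hc0 hca
  set lam := (1 - a) * (al - be) ^ 2 / Zf al be a with hlam
  have hxic : 0 < XiA a c := XiA_pos_of_lt hc0 hca ha1
  have hxib : 0 < XiA a b := XiA_pos_of_gt ha ha1 hab hb
  have hcontK2 : ContinuousOn (fun t => PhiA al be a t - lam * XiA a t) (Icc a 1) :=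
    (((continuous_PhiA al be a).sub (continuous_const.mul (continuous_XiA a))).continuousOn)
  have hcontK2' : ContinuousOn (fun t => PhiA al be a t - lam * XiA a t) (Icc 0 a) :=
    (((continuous_PhiA al be a).sub (continuous_const.mul (continuous_XiA a))).continuousOn)
  -- right: K2 b ≤ 0
  have hK2right : AntitoneOn (fun t => PhiA al be a t - lam * XiA a t) (Icc a 1) := by
    apply antitoneOn_of_deriv_nonpos (convex_Icc a 1) hcontK2
    · rw [interior_Icc]
      intro t ht
      exact (hasDerivAt_K2 lam (zpos_right hal hbe ha hu t ⟨le_of_lt ht.1, ht.2⟩) ht.2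
        hlam).differentiableAt.differentiableWithinAt
    · rw [interior_Icc]
      intro t ht
      rw [(hasDerivAt_K2 lam (zpos_right hal hbe ha hu t ⟨le_of_lt ht.1, ht.2⟩) ht.2 hlam).deriv]
      exact M2_nonpos_right hal hbe ha ha1 hu t ⟨le_of_lt ht.1, ht.2⟩
  -- left: K2 c ≥ 0
  have hK2left : AntitoneOn (fun t => PhiA al be a t - lam * XiA a t) (Icc 0 a) := by
    apply antitoneOn_of_deriv_nonpos (convex_Icc 0 a) hcontK2'
    · rw [interior_Icc]
      intro t ht
      exact (hasDerivAt_K2 lam (zpos_left hal hbe ha1 hu t (Ioo_subset_Ioc_self ht))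
        (by linarith [ht.2] : t < 1) hlam).differentiableAt.differentiableWithinAt
    · rw [interior_Icc]
      intro t ht
      rw [(hasDerivAt_K2 lam (zpos_left hal hbe ha1 hu t (Ioo_subset_Ioc_self ht))
        (by linarith [ht.2] : t < 1) hlam).deriv]
      exact M2_nonpos_left hal hbe ha0 ha1 hu t (Ioo_subset_Ioc_self ht)
  have hcmem : c ∈ Icc (0:ℝ) a := ⟨hc0, le_of_lt hca⟩
  have hamem : a ∈ Icc (0:ℝ) a := right_mem_Icc.2 ha
  have hamem' : a ∈ Icc a 1 := left_mem_Icc.2 (le_of_lt ha1)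
  have hbmem : b ∈ Icc a 1 := ⟨le_of_lt hab, hb⟩
  have hKc : 0 ≤ PhiA al be a c - lam * XiA a c := by
    have := hK2left hcmem hamem (le_of_lt hca)
    simp only [PhiA_self, XiA_self, mul_zero, sub_zero] at this
    linarith
  constructor
  · have hKb : PhiA al be a b - lam * XiA a b ≤ 0 := by
      have := hK2right hamem' hbmem (le_of_lt hab)
      simp only [PhiA_self, XiA_self, mul_zero, sub_zero] at this
      linarith
    nlinarith [mul_le_mul_of_nonneg_right (sub_nonpos.1 hKb) hxic.le,
      mul_le_mul_of_nonneg_right (sub_nonneg.1 hKc) hxib.le]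
  · intro hsa hne
    have hK2rstrict : StrictAntiOn (fun t => PhiA al be a t - lam * XiA a t) (Icc a 1) := by
      apply strictAntiOn_of_deriv_neg (convex_Icc a 1) hcontK2
      rw [interior_Icc]
      intro t ht
      rw [(hasDerivAt_K2 lam (zpos_right hal hbe ha hu t ⟨le_of_lt ht.1, ht.2⟩) ht.2 hlam).deriv]
      exact M2_neg_right hal hbe ha ha1 hu hsa hne t ht
    have hKb : PhiA al be a b - lam * XiA a b < 0 := by
      have := hK2rstrict hamem' hbmem hab
      simp only [PhiA_self, XiA_self, mul_zero, sub_zero] at this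
      linarith
    nlinarith [mul_lt_mul_of_pos_right (sub_neg.1 hKb) hxic,
      mul_le_mul_of_nonneg_right (sub_nonneg.1 hKc) hxib.le]

lemma coord_main (hal : 0 ≤ al) (hbe : 0 ≤ be) (ha : 0 ≤ a) (ha1 : a < 1)
    (hu : 0 < Zf al be a) {b c : ℝ} (hc0 : 0 ≤ c) (hcb : c < b) (hb : b ≤ 1)
    (hac : a ≠ c) (hab : a ≠ b) :
    PhiA al be a b * XiA a c ≤ XiA a b * PhiA al be a c ∧
      (0 < al → al ≠ be → PhiA al be a b * XiA a c < XiA a b * PhiA al be a c) := by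
  rcases lt_or_gt_of_ne hab with h1 | h1
  · -- a < b
    rcases lt_or_gt_of_ne hac with h2 | h2
    · -- a < c
      exact coord_right hal hbe ha ha1 hu h2 hcb hb
    · -- c < a
      exact coord_cross hal hbe ha1 hu hc0 h2 h1 hb
  · -- b < a
    exact coord_left hal hbe ha1 hu hc0 hcb h1

noncomputable def N1A (al be t : ℝ) : ℝ :=
  (al - be) * (Real.log (Zf al be t) - Real.log (Zf al be 1)) * (1 - t) + PhiA al be 1 t

lemma hasDerivAt_N1A {t : ℝ} (hz : 0 < Zf al be t) :
    HasDerivAt (N1A al be) ((1 - t) * (al - be) ^ 2 / Zf al be t) t := by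
  have hfirst : HasDerivAt (fun t => (al - be) * (Real.log (Zf al be t) - Real.log (Zf al be 1)))
      ((al - be) * ((Zf al be t)⁻¹ * (al - be) - 0)) t :=
    ((hasDerivAt_logZf hz).sub (hasDerivAt_const t _)).const_mul _
  have hone : HasDerivAt (fun t : ℝ => 1 - t) (0 - 1) t :=
    (hasDerivAt_const t (1:ℝ)).sub (hasDerivAt_id t)
  have h := (hfirst.mul hone).add (hasDerivAt_PhiA (a := 1) hz)
  refine h.congr_deriv ?_
  field_simp
  ring

lemma N1A_one : N1A al be 1 = 0 := by
  unfold N1A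
  rw [PhiA_self]
  ring

lemma N1A_nonpos (hal : 0 ≤ al) (hbe : 0 ≤ be) (hsa : 0 < al) :
    ∀ t ∈ Ioc 0 1, N1A al be t ≤ 0 := by
  have hz : ∀ t ∈ Ioc (0:ℝ) 1, 0 < Zf al be t := by
    intro t ht
    rcases eq_or_lt_of_le ht.2 with h | h
    · rw [h]
      have : Zf al be 1 = al := by unfold Zf; ring
      rw [this]; exact hsa
    · exact Zf_pos hal hbe (fun hh => by linarith [hh.1]) ht.1 h
  have hmono : MonotoneOn (N1A al be) (Ioc 0 1) := by
    apply monotoneOn_of_deriv_nonneg (convex_Ioc 0 1)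
    · intro t ht
      exact (hasDerivAt_N1A (hz t ht)).continuousAt.continuousWithinAt
    · rw [interior_Ioc]
      intro t ht
      exact (hasDerivAt_N1A (hz t (Ioo_subset_Ioc_self ht))).differentiableAt.differentiableWithinAt
    · rw [interior_Ioc]
      intro t ht
      rw [(hasDerivAt_N1A (hz t (Ioo_subset_Ioc_self ht))).deriv]
      have := hz t (Ioo_subset_Ioc_self ht)
      have h1t : (0:ℝ) ≤ 1 - t := by linarith [ht.2]
      positivity
  intro t ht
  have := hmono ht (right_mem_Ioc.2 one_pos) ht.2
  rwa [N1A_one] at this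

lemma N1A_neg (hal : 0 ≤ al) (hbe : 0 ≤ be) (hsa : 0 < al) (hne : al ≠ be) :
    ∀ t ∈ Ioo 0 1, N1A al be t < 0 := by
  have hz : ∀ t ∈ Ioc (0:ℝ) 1, 0 < Zf al be t := by
    intro t ht
    rcases eq_or_lt_of_le ht.2 with h | h
    · rw [h]
      have : Zf al be 1 = al := by unfold Zf; ring
      rw [this]; exact hsa
    · exact Zf_pos hal hbe (fun hh => by linarith [hh.1]) ht.1 h
  have hmono : StrictMonoOn (N1A al be) (Ioc 0 1) := by
    apply strictMonoOn_of_deriv_pos (convex_Ioc 0 1)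
    · intro t ht
      exact (hasDerivAt_N1A (hz t ht)).continuousAt.continuousWithinAt
    · rw [interior_Ioc]
      intro t ht
      rw [(hasDerivAt_N1A (hz t (Ioo_subset_Ioc_self ht))).deriv]
      have := hz t (Ioo_subset_Ioc_self ht)
      have h1t : (0:ℝ) < 1 - t := by linarith [ht.2]
      have hd : (0:ℝ) < (al - be) ^ 2 := by
        have : al - be ≠ 0 := sub_ne_zero.2 hne
        positivity
      positivity
  intro t ht
  have := hmono (Ioo_subset_Ioc_self ht) (right_mem_Ioc.2 one_pos) ht.2
  rwa [N1A_one] at this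

lemma coord_one (hal : 0 ≤ al) (hbe : 0 ≤ be) (hsa : 0 < al) {b c : ℝ}
    (hc0 : 0 ≤ c) (hcb : c < b) (hb1 : b < 1) :
    PhiA al be 1 b * (1 - c) ≤ (1 - b) * PhiA al be 1 c ∧
      (al ≠ be → PhiA al be 1 b * (1 - c) < (1 - b) * PhiA al be 1 c) := by
  have h1b : (0:ℝ) < 1 - b := by linarith
  have h1c : (0:ℝ) < 1 - c := by linarith
  have hone : ∀ t ∈ Icc c b, (1:ℝ) - t ≠ 0 := by
    intro t ht
    have : t < 1 := lt_of_le_of_lt ht.2 hb1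
    intro h
    linarith
  have hcont : ContinuousOn (fun t => PhiA al be 1 t / (1 - t)) (Icc c b) :=
    ((continuous_PhiA al be 1).continuousOn).div
      ((continuous_const.sub continuous_id).continuousOn) hone
  have hderiv : ∀ t ∈ Ioo c b, HasDerivAt (fun t => PhiA al be 1 t / (1 - t))
      (N1A al be t / (1 - t) ^ 2) t := by
    intro t ht
    have ht0 : 0 < t := lt_of_le_of_lt hc0 ht.1
    have ht1 : t < 1 := lt_trans ht.2 hb1
    have hz : 0 < Zf al be t := Zf_pos hal hbe (fun hh => by linarith [hh.1]) ht0 ht1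
    have honed : HasDerivAt (fun t : ℝ => 1 - t) (0 - 1) t :=
      (hasDerivAt_const t (1:ℝ)).sub (hasDerivAt_id t)
    have h := (hasDerivAt_PhiA (a := 1) hz).div honed (by linarith : (1:ℝ) - t ≠ 0)
    refine h.congr_deriv ?_
    unfold N1A
    ring
  constructor
  · have hanti : AntitoneOn (fun t => PhiA al be 1 t / (1 - t)) (Icc c b) := by
      apply antitoneOn_of_deriv_nonpos (convex_Icc c b) hcont
      · rw [interior_Icc]
        intro t ht
        exact (hderiv t ht).differentiableAt.differentiableWithinAt
      · rw [interior_Icc]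
        intro t ht
        rw [(hderiv t ht).deriv]
        apply div_nonpos_of_nonpos_of_nonneg _ (sq_nonneg _)
        exact N1A_nonpos hal hbe hsa t ⟨lt_of_le_of_lt hc0 ht.1, le_of_lt (lt_trans ht.2 hb1)⟩
    have h := hanti (left_mem_Icc.2 (le_of_lt hcb)) (right_mem_Icc.2 (le_of_lt hcb)) (le_of_lt hcb)
    rw [div_le_div_iff₀ h1b h1c] at h
    linarith
  · intro hne
    have hanti : StrictAntiOn (fun t => PhiA al be 1 t / (1 - t)) (Icc c b) := by
      apply strictAntiOn_of_deriv_neg (convex_Icc c b) hcont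
      rw [interior_Icc]
      intro t ht
      rw [(hderiv t ht).deriv]
      apply div_neg_of_neg_of_pos
      · exact N1A_neg hal hbe hsa hne t ⟨lt_of_le_of_lt hc0 ht.1, lt_trans ht.2 hb1⟩
      · have := lt_trans ht.2 hb1
        have h1t : (0:ℝ) < 1 - t := by linarith
        positivity
    have h := hanti (left_mem_Icc.2 (le_of_lt hcb)) (right_mem_Icc.2 (le_of_lt hcb)) hcb
    rw [div_lt_div_iff₀ h1b h1c] at h
    linarith

end Chain

noncomputable def KL {n : ℕ} (p q : Fin n → ℝ) : ℝ :=
  ∑ i, p i * Real.log (p i / q i)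

lemma xi_eq_s13 (a t : ℝ) : xi a t = XiA a t := by
  unfold xi zeta XiA; ring

lemma Zf_nonneg {al be t : ℝ} (hal : 0 ≤ al) (hbe : 0 ≤ be) (ht0 : 0 ≤ t) (ht1 : t ≤ 1) :
    0 ≤ Zf al be t := by
  unfold Zf; nlinarith

lemma Zf_one (al be : ℝ) : Zf al be 1 = al := by unfold Zf; ring

lemma Zf_zero (al be : ℝ) : Zf al be 0 = be := by unfold Zf; ring

lemma PhiA_zero (a t : ℝ) : PhiA 0 0 a t = 0 := by
  unfold PhiA Zf; norm_num

lemma Zf_flip (al be t : ℝ) : Zf be al (1 - t) = Zf al be t := by unfold Zf; ring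

lemma PhiA_flip (al be a t : ℝ) : PhiA be al (1 - a) (1 - t) = PhiA al be a t := by
  unfold PhiA; rw [Zf_flip al be t, Zf_flip al be a]

lemma PhiA_flip1 (al be t : ℝ) : PhiA be al 1 (1 - t) = PhiA al be 0 t := by
  have h1 : Zf be al 1 = Zf al be 0 := by unfold Zf; ring
  unfold PhiA; rw [Zf_flip al be t, h1]

lemma XiA_pos {a t : ℝ} (ha : 0 ≤ a) (ha1 : a < 1) (ht0 : 0 ≤ t) (ht1 : t ≤ 1) (hne : t ≠ a) :
    0 < XiA a t := by
  rcases lt_or_gt_of_ne hne with h | h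
  · exact XiA_pos_of_lt ht0 h ha1
  · exact XiA_pos_of_gt ha ha1 h ht1

lemma KL_self {n : ℕ} (p : Fin n → ℝ) : KL p p = 0 := by
  unfold KL
  apply Finset.sum_eq_zero
  intro i _
  rcases eq_or_ne (p i) 0 with h | h
  · rw [h]; ring
  · rw [div_self h, Real.log_one, mul_zero]

lemma good_coord {n : ℕ} {α β : Fin n → ℝ} (hα0 : ∀ i, 0 ≤ α i) (hβ0 : ∀ i, 0 ≤ β i)
    (hα1 : ∑ i, α i = 1) (hβ1 : ∑ i, β i = 1) (hne : α ≠ β) :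
    ∃ i, 0 < α i ∧ α i ≠ β i := by
  by_contra h
  push_neg at h
  have hle : ∀ i ∈ Finset.univ, α i ≤ β i := by
    intro i _
    rcases eq_or_lt_of_le (hα0 i) with h1 | h1
    · rw [← h1]; exact hβ0 i
    · exact le_of_eq (h i h1)
  have hsum : ∑ i, α i = ∑ i, β i := by rw [hα1, hβ1]
  have heq := (Finset.sum_eq_sum_iff_of_le hle).1 hsum
  exact hne (funext fun i => heq i (Finset.mem_univ i))

lemma KL_bridge {n : ℕ} (α β : Fin n → ℝ) (hα0 : ∀ i, 0 ≤ α i) (hβ0 : ∀ i, 0 ≤ β i)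
    (hα1 : ∑ i, α i = 1) (hβ1 : ∑ i, β i = 1) (a t : ℝ) (ht0 : 0 ≤ t) (ht1 : t ≤ 1)
    (h0 : ∀ i, Zf (α i) (β i) a = 0 → α i = 0 ∧ β i = 0) :
    KL (fun i => t * α i + (1 - t) * β i) (fun i => a * α i + (1 - a) * β i)
      = ∑ i, PhiA (α i) (β i) a t := by
  unfold KL
  have hzt : ∀ i, (0:ℝ) ≤ Zf (α i) (β i) t := fun i => Zf_nonneg (hα0 i) (hβ0 i) ht0 ht1
  have hterm : ∀ i, (t * α i + (1 - t) * β i) *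
        Real.log ((t * α i + (1 - t) * β i) / (a * α i + (1 - a) * β i))
      = PhiA (α i) (β i) a t + Zf (α i) (β i) t - Zf (α i) (β i) a := by
    intro i
    have hv : (t * α i + (1 - t) * β i) = Zf (α i) (β i) t := rfl
    have hu : (a * α i + (1 - a) * β i) = Zf (α i) (β i) a := rfl
    rw [hv, hu]
    unfold PhiA
    rcases eq_or_lt_of_le (hzt i) with hz | hz
    · rw [← hz]; simp
    · rcases eq_or_ne (Zf (α i) (β i) a) 0 with hu0 | hu0
      · obtain ⟨h1, h2⟩ := h0 i hu0
        rw [h1, h2] at hz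
        unfold Zf at hz
        simp at hz
      · rw [Real.log_div hz.ne' hu0]; ring
  rw [Finset.sum_congr rfl (fun i _ => hterm i)]
  have hsZ : ∀ s : ℝ, ∑ i, Zf (α i) (β i) s = 1 := by
    intro s
    unfold Zf
    rw [Finset.sum_add_distrib, ← Finset.mul_sum, ← Finset.mul_sum, hα1, hβ1]
    ring
  rw [Finset.sum_sub_distrib, Finset.sum_add_distrib, hsZ t, hsZ a]
  ring

theorem stmt13 (n : ℕ) (α β : Fin n → ℝ)
    (hα : (∀ i, 0 ≤ α i) ∧ ∑ i, α i = 1)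
    (hβ : (∀ i, 0 ≤ β i) ∧ ∑ i, β i = 1)
    (a b c r : ℝ) (ha : 0 ≤ a) (ha1 : a ≤ 1) (hc : 0 ≤ c) (hcb : c < b) (hb : b ≤ 1)
    (u v w : Fin n → ℝ)
    (hu : u = fun i => a * α i + (1 - a) * β i)
    (hv : v = fun i => b * α i + (1 - b) * β i)
    (hw : w = fun i => c * α i + (1 - c) * β i)
    (hvu : ∀ i, u i = 0 → v i = 0)
    (hwu : ∀ i, u i = 0 → w i = 0)
    (hvpos : 0 < KL v u) (hwpos : 0 < KL w u)
    (hr : KL v u = r * KL w u) :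
    1 / rho (1 - a) (1 - c) (1 - b) < r ∧ r < rho a b c := by
  obtain ⟨hα0, hα1⟩ := hα
  obtain ⟨hβ0, hβ1⟩ := hβ
  subst hu hv hw
  have hb0 : 0 < b := lt_of_le_of_lt hc hcb
  have hc1 : c < 1 := lt_of_lt_of_le hcb hb
  have hab2 : a ≠ b := by
    intro h
    subst h
    rw [KL_self] at hvpos
    exact lt_irrefl 0 hvpos
  have hac2 : a ≠ c := by
    intro h
    subst h
    rw [KL_self] at hwpos
    exact lt_irrefl 0 hwpos
  have hαβ : α ≠ β := by
    intro hh
    have he : (fun i => b * α i + (1 - b) * β i) = (fun i => a * α i + (1 - a) * β i) := by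
      funext i
      rw [← hh]
      ring
    rw [he, KL_self] at hvpos
    exact lt_irrefl 0 hvpos
  have h0 : ∀ i, Zf (α i) (β i) a = 0 → α i = 0 ∧ β i = 0 := by
    intro i hz
    have hv0 : b * α i + (1 - b) * β i = 0 := hvu i hz
    have hw0 : c * α i + (1 - c) * β i = 0 := hwu i hz
    constructor
    · by_contra hne
      have hpos : 0 < α i := (hα0 i).lt_of_ne (Ne.symm hne)
      nlinarith [mul_pos hb0 hpos, mul_nonneg (by linarith : (0:ℝ) ≤ 1 - b) (hβ0 i)]
    · by_contra hne
      have hpos : 0 < β i := (hβ0 i).lt_of_ne (Ne.symm hne)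
      nlinarith [mul_nonneg hc (hα0 i), mul_pos (by linarith : (0:ℝ) < 1 - c) hpos]
  have hSb := KL_bridge α β hα0 hβ0 hα1 hβ1 a b (le_of_lt hb0) hb h0
  have hSc := KL_bridge α β hα0 hβ0 hα1 hβ1 a c hc (le_of_lt hc1) h0
  rw [hSb] at hvpos hr
  rw [hSc] at hwpos hr
  set Sb := ∑ i, PhiA (α i) (β i) a b with hSbdef
  set Sc := ∑ i, PhiA (α i) (β i) a c with hScdef
  have hr' : r = Sb / Sc := by
    rw [eq_div_iff hwpos.ne']
    linarith [hr]
  obtain ⟨i0, hi0a, hi0ne⟩ := good_coord hα0 hβ0 hα1 hβ1 hαβ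
  obtain ⟨j0, hj0b, hj0ne⟩ := good_coord hβ0 hα0 hβ1 hα1
    (fun h => hαβ (funext fun i => (congrFun h i).symm))
  have hui0 : 0 < Zf (α i0) (β i0) a := by
    rcases eq_or_lt_of_le (Zf_nonneg (hα0 i0) (hβ0 i0) ha ha1) with h | h
    · exact absurd (h0 i0 h.symm).1 (ne_of_gt hi0a)
    · exact h
  have huj0 : 0 < Zf (α j0) (β j0) a := by
    rcases eq_or_lt_of_le (Zf_nonneg (hα0 j0) (hβ0 j0) ha ha1) with h | h
    · exact absurd (h0 j0 h.symm).2 (ne_of_gt hj0b)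
    · exact h
  constructor
  · -- lower bound
    rcases eq_or_lt_of_le ha with hA | hA
    · -- a = 0
      subst hA
      have hc0' : 0 < c := lt_of_le_of_ne hc hac2
      have hfi : ∀ i ∈ Finset.univ, PhiA (α i) (β i) 0 c * b
          ≤ c * PhiA (α i) (β i) 0 b := by
        intro i _
        rcases eq_or_lt_of_le (Zf_nonneg (hα0 i) (hβ0 i) ha ha1) with hzu | hzu
        · obtain ⟨h1, h2⟩ := h0 i hzu.symm
          rw [h1, h2, PhiA_zero, PhiA_zero]
          simp
        · rw [Zf_zero] at hzu
          have hm := (coord_one (hβ0 i) (hα0 i) hzu (by linarith : (0:ℝ) ≤ 1 - b)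
            (by linarith : 1 - b < 1 - c) (by linarith : 1 - c < 1)).1
          rw [PhiA_flip1 (α i) (β i) c, PhiA_flip1 (α i) (β i) b,
            show (1:ℝ) - (1 - b) = b from by ring, show (1:ℝ) - (1 - c) = c from by ring] at hm
          exact hm
      have hstrict : ∃ i ∈ Finset.univ, PhiA (α i) (β i) 0 c * b
          < c * PhiA (α i) (β i) 0 b := by
        refine ⟨j0, Finset.mem_univ _, ?_⟩
        rw [Zf_zero] at huj0
        have hm := (coord_one (hβ0 j0) (hα0 j0) huj0 (by linarith : (0:ℝ) ≤ 1 - b)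
          (by linarith : 1 - b < 1 - c) (by linarith : 1 - c < 1)).2 hj0ne
        rw [PhiA_flip1 (α j0) (β j0) c, PhiA_flip1 (α j0) (β j0) b,
          show (1:ℝ) - (1 - b) = b from by ring, show (1:ℝ) - (1 - c) = c from by ring] at hm
        exact hm
      have hsum := Finset.sum_lt_sum hfi hstrict
      rw [← Finset.sum_mul, ← Finset.mul_sum] at hsum
      rw [show (1:ℝ) - 0 = 1 from by norm_num, rho, if_neg (lt_irrefl (1:ℝ)),
        show (1:ℝ) - (1 - c) = c from by ring, show (1:ℝ) - (1 - b) = b from by ring,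
        one_div_div, hr', div_lt_div_iff₀ hc0' hwpos]
      linarith [hsum]
    · -- 0 < a
      have h1a0 : (0:ℝ) ≤ 1 - a := by linarith
      have h1a1 : 1 - a < 1 := by linarith
      have hfi : ∀ i ∈ Finset.univ, PhiA (α i) (β i) a c * XiA (1 - a) (1 - b)
          ≤ XiA (1 - a) (1 - c) * PhiA (α i) (β i) a b := by
        intro i _
        rcases eq_or_lt_of_le (Zf_nonneg (hα0 i) (hβ0 i) ha ha1) with hzu | hzu
        · obtain ⟨h1, h2⟩ := h0 i hzu.symm
          rw [h1, h2, PhiA_zero, PhiA_zero]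
          simp
        · have hzf : 0 < Zf (β i) (α i) (1 - a) := by rw [Zf_flip]; exact hzu
          have hm := (coord_main (hβ0 i) (hα0 i) h1a0 h1a1 hzf
            (by linarith : (0:ℝ) ≤ 1 - b) (by linarith : 1 - b < 1 - c)
            (by linarith : 1 - c ≤ 1)
            (fun hh => hab2 (by linarith)) (fun hh => hac2 (by linarith))).1
          rw [PhiA_flip (α i) (β i) a c, PhiA_flip (α i) (β i) a b] at hm
          exact hm
      have hstrict : ∃ i ∈ Finset.univ, PhiA (α i) (β i) a c * XiA (1 - a) (1 - b)
          < XiA (1 - a) (1 - c) * PhiA (α i) (β i) a b := by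
        refine ⟨j0, Finset.mem_univ _, ?_⟩
        have hzf : 0 < Zf (β j0) (α j0) (1 - a) := by rw [Zf_flip]; exact huj0
        have hm := (coord_main (hβ0 j0) (hα0 j0) h1a0 h1a1 hzf
          (by linarith : (0:ℝ) ≤ 1 - b) (by linarith : 1 - b < 1 - c)
          (by linarith : 1 - c ≤ 1)
          (fun hh => hab2 (by linarith)) (fun hh => hac2 (by linarith))).2 hj0b hj0ne
        rw [PhiA_flip (α j0) (β j0) a c, PhiA_flip (α j0) (β j0) a b] at hm
        exact hm
      have hsum := Finset.sum_lt_sum hfi hstrict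
      rw [← Finset.sum_mul, ← Finset.mul_sum] at hsum
      have hX1c : 0 < XiA (1 - a) (1 - c) :=
        XiA_pos h1a0 h1a1 (by linarith) (by linarith) (fun hh => hac2 (by linarith))
      rw [rho, if_pos h1a1, xi_eq_s13, xi_eq_s13, one_div_div, hr', div_lt_div_iff₀ hX1c hwpos]
      linarith [hsum]
  · -- upper bound
    rcases lt_or_eq_of_le ha1 with hA | hA
    · -- a < 1
      have hfi : ∀ i ∈ Finset.univ, PhiA (α i) (β i) a b * XiA a c
          ≤ XiA a b * PhiA (α i) (β i) a c := by
        intro i _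
        rcases eq_or_lt_of_le (Zf_nonneg (hα0 i) (hβ0 i) ha ha1) with hzu | hzu
        · obtain ⟨h1, h2⟩ := h0 i hzu.symm
          rw [h1, h2, PhiA_zero, PhiA_zero]
          simp
        · exact (coord_main (hα0 i) (hβ0 i) ha hA hzu hc hcb hb hac2 hab2).1
      have hstrict : ∃ i ∈ Finset.univ, PhiA (α i) (β i) a b * XiA a c
          < XiA a b * PhiA (α i) (β i) a c :=
        ⟨i0, Finset.mem_univ _,
          (coord_main (hα0 i0) (hβ0 i0) ha hA hui0 hc hcb hb hac2 hab2).2 hi0a hi0ne⟩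
      have hsum := Finset.sum_lt_sum hfi hstrict
      rw [← Finset.sum_mul, ← Finset.mul_sum] at hsum
      have hxc : 0 < XiA a c := XiA_pos ha hA hc (le_of_lt hc1) (Ne.symm hac2)
      rw [hr', rho, if_pos hA, xi_eq_s13, xi_eq_s13, div_lt_div_iff₀ hwpos hxc]
      exact hsum
    · -- a = 1
      subst hA
      have hb1 : b < 1 := lt_of_le_of_ne hb (fun h => hab2 h.symm)
      have hfi : ∀ i ∈ Finset.univ, PhiA (α i) (β i) 1 b * (1 - c)
          ≤ (1 - b) * PhiA (α i) (β i) 1 c := by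
        intro i _
        rcases eq_or_lt_of_le (Zf_nonneg (hα0 i) (hβ0 i) ha ha1) with hzu | hzu
        · obtain ⟨h1, h2⟩ := h0 i hzu.symm
          rw [h1, h2, PhiA_zero, PhiA_zero]
          simp
        · rw [Zf_one] at hzu
          exact (coord_one (hα0 i) (hβ0 i) hzu hc hcb hb1).1
      have hstrict : ∃ i ∈ Finset.univ, PhiA (α i) (β i) 1 b * (1 - c)
          < (1 - b) * PhiA (α i) (β i) 1 c := by
        refine ⟨i0, Finset.mem_univ _, ?_⟩
        rw [Zf_one] at hui0
        exact (coord_one (hα0 i0) (hβ0 i0) hui0 hc hcb hb1).2 hi0ne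
      have hsum := Finset.sum_lt_sum hfi hstrict
      rw [← Finset.sum_mul, ← Finset.mul_sum] at hsum
      rw [hr', rho, if_neg (lt_irrefl (1:ℝ)), div_lt_div_iff₀ hwpos (by linarith : (0:ℝ) < 1 - c)]
      exact hsum
end
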